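/- arXiv:2201.10288 — 9 statements merged into one kernel-verified Lean document; each statement's English description precedes it below -/
import Mathlib

section
/- For every real s ∈ (-4m², ∞) the value F_a(s) is real; the function s ↦ F_a(s) is strictly increasing on (-4m², ∞); and F_a(s) → +∞ as s → +∞. -/
open MeasureTheory Complex Filter

/-- The half-line `(-∞, -4m²]` viewed as a subset of `ℂ`. -/
def cutSet (m : ℝ) : Set ℂ := {z : ℂ | z.im = 0 ∧ z.re ≤ -4 * m ^ 2}

/-- The function `F_a(z) = ∫_{4m²}^∞ √(1 - 4m²/u) (1/(u+a) - 1/(u+z)) du`. -/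
noncomputable def Fa (m a : ℝ) (z : ℂ) : ℂ :=
  ∫ u in Set.Ioi (4 * m ^ 2), (Real.sqrt (1 - 4 * m ^ 2 / u) : ℂ) *
    (1 / ((u : ℂ) + (a : ℂ)) - 1 / ((u : ℂ) + z))

noncomputable def gR (m a s u : ℝ) : ℝ :=
  Real.sqrt (1 - 4 * m ^ 2 / u) * (1 / (u + a) - 1 / (u + s))

lemma Fa_eq (m a s : ℝ) :
    Fa m a (s : ℂ) = ((∫ u in Set.Ioi (4 * m ^ 2), gR m a s u : ℝ) : ℂ) := by
  rw [Fa, show ((∫ u in Set.Ioi (4*m^2), gR m a s u : ℝ) : ℂ)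
      = ∫ u in Set.Ioi (4*m^2), ((gR m a s u : ℝ) : ℂ) from _root_.integral_ofReal.symm]
  congr 1
  ext u
  unfold gR
  push_cast
  ring


lemma gR_meas (m a s : ℝ) : Measurable (gR m a s) := by
  unfold gR; fun_prop

lemma sqrt_le_one' (m u : ℝ) (hu : 0 < u) : Real.sqrt (1 - 4 * m ^ 2 / u) ≤ 1 := by
  have h : 0 ≤ 4 * m ^ 2 / u := by positivity
  calc Real.sqrt (1 - 4 * m ^ 2 / u) ≤ Real.sqrt 1 := Real.sqrt_le_sqrt (by linarith)
    _ = 1 := Real.sqrt_one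

lemma gR_abs (m a s u : ℝ) :
    |gR m a s u| = Real.sqrt (1 - 4 * m ^ 2 / u) * |1 / (u + a) - 1 / (u + s)| := by
  rw [gR, abs_mul, _root_.abs_of_nonneg (Real.sqrt_nonneg _)]

lemma gR_integrable (m a s : ℝ) (hm : 0 < m) (ha : -4 * m ^ 2 < a) (hs : -4 * m ^ 2 < s) :
    IntegrableOn (gR m a s) (Set.Ioi (4 * m ^ 2)) := by
  have hm2 : (0:ℝ) < 4 * m ^ 2 := by positivity
  set T : ℝ := max (4 * m ^ 2 + 1) (2 * max |a| |s| + 1) with hT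
  have hT1 : 4 * m ^ 2 < T := lt_of_lt_of_le (by linarith) (le_max_left _ _)
  have hT0 : 0 < T := by linarith
  have hTa : 2 * |a| < T := by
    have h1 : 2 * |a| + 1 ≤ 2 * max |a| |s| + 1 := by
      have := le_max_left |a| |s|; linarith
    linarith [le_max_right (4 * m ^ 2 + 1) (2 * max |a| |s| + 1)]
  have hTs : 2 * |s| < T := by
    have h1 : 2 * |s| + 1 ≤ 2 * max |a| |s| + 1 := by
      have := le_max_right |a| |s|; linarith
    linarith [le_max_right (4 * m ^ 2 + 1) (2 * max |a| |s| + 1)]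
  rw [show Set.Ioi (4 * m ^ 2) = Set.Ioc (4 * m ^ 2) T ∪ Set.Ioi T from
    (Set.Ioc_union_Ioi_eq_Ioi hT1.le).symm]
  apply IntegrableOn.union
  · -- bounded on finite measure set
    apply Measure.integrableOn_of_bounded (M := 1 / (4 * m ^ 2 + a) + 1 / (4 * m ^ 2 + s))
      (by simp) (gR_meas m a s).aestronglyMeasurable
    filter_upwards [ae_restrict_mem measurableSet_Ioc] with u hu
    have hu1 : 4 * m ^ 2 < u := hu.1
    have hua : 0 < u + a := by linarith
    have hus : 0 < u + s := by linarith
    have h1 : |1 / (u + a) - 1 / (u + s)| ≤ 1 / (4 * m ^ 2 + a) + 1 / (4 * m ^ 2 + s) := by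
      have e1 : 1 / (u + a) ≤ 1 / (4 * m ^ 2 + a) :=
        one_div_le_one_div_of_le (by linarith) (by linarith)
      have e2 : 1 / (u + s) ≤ 1 / (4 * m ^ 2 + s) :=
        one_div_le_one_div_of_le (by linarith) (by linarith)
      have p1 : (0:ℝ) ≤ 1 / (u + s) := by positivity
      have p2 : (0:ℝ) ≤ 1 / (u + a) := by positivity
      rw [abs_sub_le_iff]
      constructor <;> linarith
    calc ‖gR m a s u‖ = Real.sqrt (1 - 4 * m ^ 2 / u) * |1 / (u + a) - 1 / (u + s)| := by
          rw [Real.norm_eq_abs, gR_abs]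
      _ ≤ 1 * (1 / (4 * m ^ 2 + a) + 1 / (4 * m ^ 2 + s)) :=
          mul_le_mul (sqrt_le_one' m u (by linarith)) h1 (abs_nonneg _) (by norm_num)
      _ = _ := by ring
  · -- tail: dominate by C * u⁻²
    have hint : IntegrableOn (fun u : ℝ => (|s| + |a|) * (4 * (u ^ 2)⁻¹)) (Set.Ioi T) := by
      have h := integrableOn_Ioi_rpow_of_lt (a := -2) (by norm_num) hT0
      have h2 : IntegrableOn (fun u : ℝ => (u ^ 2)⁻¹) (Set.Ioi T) := by
        apply h.congr_fun ?_ measurableSet_Ioi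
        intro u hu
        have hu0 : (0:ℝ) < u := hT0.trans hu
        simp only []
        rw [show ((-2:ℝ)) = ((-2:ℤ):ℝ) by norm_num, Real.rpow_intCast, zpow_neg]
        norm_num [zpow_ofNat]
      exact (h2.const_mul 4).const_mul _
    apply Integrable.mono hint (gR_meas m a s).aestronglyMeasurable
    filter_upwards [ae_restrict_mem measurableSet_Ioi] with u hu
    have huT : T < u := hu
    have hu0 : 0 < u := lt_trans hT0 huT
    have hwa : -|a| ≤ a := neg_abs_le a
    have hws : -|s| ≤ s := neg_abs_le s
    have hua : u / 2 ≤ u + a := by nlinarith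
    have hus : u / 2 ≤ u + s := by nlinarith
    have hua0 : 0 < u + a := lt_of_lt_of_le (by linarith) hua
    have hus0 : 0 < u + s := lt_of_lt_of_le (by linarith) hus
    have key : |1 / (u + a) - 1 / (u + s)| ≤ (|s| + |a|) * (4 * (u ^ 2)⁻¹) := by
      have e : 1 / (u + a) - 1 / (u + s) = (s - a) / ((u + a) * (u + s)) := by
        field_simp
        ring
      rw [e, abs_div, _root_.abs_of_pos (mul_pos hua0 hus0)]
      have h1 : |s - a| ≤ |s| + |a| := abs_sub _ _
      have h2 : u ^ 2 / 4 ≤ (u + a) * (u + s) := by nlinarith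
      calc |s - a| / ((u + a) * (u + s)) ≤ (|s| + |a|) / (u ^ 2 / 4) :=
            div_le_div₀ (by positivity) h1 (by positivity) h2
        _ = (|s| + |a|) * (4 * (u ^ 2)⁻¹) := by field_simp
    calc ‖gR m a s u‖ = Real.sqrt (1 - 4 * m ^ 2 / u) * |1 / (u + a) - 1 / (u + s)| := by
          rw [Real.norm_eq_abs, gR_abs]
      _ ≤ 1 * ((|s| + |a|) * (4 * (u ^ 2)⁻¹)) :=
          mul_le_mul (sqrt_le_one' m u hu0) key (abs_nonneg _) (by norm_num)
      _ ≤ ‖(|s| + |a|) * (4 * (u ^ 2)⁻¹)‖ := by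
          rw [one_mul, Real.norm_eq_abs]; exact le_abs_self _






lemma gR_mono' (m a : ℝ) (hm : 0 < m) (s₁ s₂ u : ℝ) (h1 : -4 * m ^ 2 < s₁) (h12 : s₁ < s₂)
    (hu : 4 * m ^ 2 < u) : gR m a s₁ u < gR m a s₂ u := by
  have hm2 : (0:ℝ) < 4 * m ^ 2 := by positivity
  have hu0 : 0 < u := hm2.trans hu
  have hsqrt : 0 < Real.sqrt (1 - 4 * m ^ 2 / u) := by
    apply Real.sqrt_pos.mpr
    rw [sub_pos, div_lt_one hu0]; exact hu
  unfold gR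
  apply mul_lt_mul_of_pos_left _ hsqrt
  have e1 : 0 < u + s₁ := by linarith
  have e2 : 0 < u + s₂ := by linarith
  have : 1 / (u + s₂) < 1 / (u + s₁) := one_div_lt_one_div_of_lt e1 (by linarith)
  linarith

lemma gR_nonneg' (m a : ℝ) (hm : 0 < m) (ha' : -4 * m ^ 2 < a) (s u : ℝ) (hs : a ≤ s) (hu : 4 * m ^ 2 < u) : 0 ≤ gR m a s u := by
  have hm2 : (0:ℝ) < 4 * m ^ 2 := by positivity
  unfold gR
  apply mul_nonneg (Real.sqrt_nonneg _)
  have e1 : 0 < u + a := by linarith [ha']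
  have : 1 / (u + s) ≤ 1 / (u + a) := by
    apply one_div_le_one_div_of_le e1 (by linarith)
  linarith




lemma integral_gR_lt (m a s₁ s₂ : ℝ) (hm : 0 < m) (ha : -4 * m ^ 2 < a)
    (h1 : -4 * m ^ 2 < s₁) (h12 : s₁ < s₂) :
    ∫ u in Set.Ioi (4 * m ^ 2), gR m a s₁ u < ∫ u in Set.Ioi (4 * m ^ 2), gR m a s₂ u := by
  have i1 := gR_integrable m a s₁ hm ha h1
  have i2 := gR_integrable m a s₂ hm ha (by linarith)
  have hii : IntegrableOn (fun u => gR m a s₂ u - gR m a s₁ u) (Set.Ioi (4 * m ^ 2)) :=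
    i2.sub i1
  have hpos : 0 < ∫ u in Set.Ioi (4 * m ^ 2), (gR m a s₂ u - gR m a s₁ u) := by
    rw [setIntegral_pos_iff_support_of_nonneg_ae ?nonneg hii]
    case nonneg =>
      filter_upwards [ae_restrict_mem measurableSet_Ioi] with u hu
      exact sub_nonneg.mpr (gR_mono' m a hm s₁ s₂ u h1 h12 hu).le
    have hsub : Set.Ioi (4 * m ^ 2) ⊆ Function.support (fun u => gR m a s₂ u - gR m a s₁ u) :=
      fun u hu => sub_ne_zero.mpr (gR_mono' m a hm s₁ s₂ u h1 h12 hu).ne'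
    rw [Set.inter_eq_self_of_subset_right hsub, Real.volume_Ioi]
    simp
  rw [integral_sub i2 i1] at hpos
  linarith

lemma integral_gR_tendsto (m a : ℝ) (hm : 0 < m) (ha : -4 * m ^ 2 < a) :
    Tendsto (fun s : ℝ => ∫ u in Set.Ioi (4 * m ^ 2), gR m a s u) atTop atTop := by
  have hm2 : (0:ℝ) < 4 * m ^ 2 := by positivity
  set u0 : ℝ := max (8 * m ^ 2) (max a 1) with hu0def
  have hu08 : 8 * m ^ 2 ≤ u0 := le_max_left _ _
  have hu0a : a ≤ u0 := le_trans (le_max_left _ _) (le_max_right _ _)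
  have hu01 : (1:ℝ) ≤ u0 := le_trans (le_max_right _ _) (le_max_right _ _)
  have hu04 : 4 * m ^ 2 < u0 := by nlinarith
  have hu0pos : 0 < u0 := by linarith
  set c : ℝ := Real.sqrt (1 - 4 * m ^ 2 / u0) with hcdef
  have hc : 0 < c := by
    apply Real.sqrt_pos.mpr
    rw [sub_pos, div_lt_one hu0pos]; exact hu04
  set K : ℝ := c / 2 * Real.log u0 + c with hKdef
  have hlow : ∀ s : ℝ, u0 + 1 ≤ s →
      c / 2 * Real.log s - K ≤ ∫ u in Set.Ioi (4 * m ^ 2), gR m a s u := by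
    intro s hs
    have hs0 : 0 < s := by linarith
    have hsa : a ≤ s := by linarith
    have hs4 : -4 * m ^ 2 < s := by linarith
    have hu0s : u0 ≤ s := by linarith
    have hIsub : Set.Ioc u0 s ⊆ Set.Ioi (4 * m ^ 2) := fun u hu => hu04.trans hu.1
    have hgint := gR_integrable m a s hm ha hs4
    -- step 1
    have step1 : ∫ u in Set.Ioc u0 s, gR m a s u ≤ ∫ u in Set.Ioi (4 * m ^ 2), gR m a s u := by
      apply setIntegral_mono_set hgint ?_ hIsub.eventuallyLE
      filter_upwards [ae_restrict_mem measurableSet_Ioi] with u hu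
      exact gR_nonneg' m a hm ha s u hsa hu
    -- step 2
    have intL : IntegrableOn (fun u : ℝ => c * (2⁻¹ * u⁻¹ - s⁻¹)) (Set.Ioc u0 s) := by
      apply ContinuousOn.integrableOn_Icc (a := u0) (b := s) ?_ |>.mono_set
        Set.Ioc_subset_Icc_self
      apply continuousOn_const.mul
      apply ContinuousOn.sub ?_ continuousOn_const
      apply continuousOn_const.mul
      apply ContinuousOn.inv₀ continuousOn_id
      intro x hx
      simp only [id_eq]
      have hx1 : u0 ≤ x := hx.1
      intro h0; rw [h0] at hx1; linarith
    have step2 : ∫ u in Set.Ioc u0 s, c * (2⁻¹ * u⁻¹ - s⁻¹) ≤ ∫ u in Set.Ioc u0 s, gR m a s u := by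
      apply setIntegral_mono_on intL (hgint.mono_set hIsub) measurableSet_Ioc
      intro u hu
      have hu1 : u0 < u := hu.1
      have hu2 : u ≤ s := hu.2
      have hupos : 0 < u := lt_trans hu0pos hu1
      have hsqrt : c ≤ Real.sqrt (1 - 4 * m ^ 2 / u) := by
        apply Real.sqrt_le_sqrt
        have : 4 * m ^ 2 / u ≤ 4 * m ^ 2 / u0 := by
          apply div_le_div_of_nonneg_left (by positivity) hu0pos hu1.le
        linarith
      have hua : 0 < u + a := by linarith
      have hA1 : 2⁻¹ * u⁻¹ ≤ 1 / (u + a) := by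
        rw [show 2⁻¹ * u⁻¹ = 1 / (2 * u) by rw [one_div, mul_inv]]
        apply one_div_le_one_div_of_le hua (by linarith)
      have hA2 : 1 / (u + s) ≤ s⁻¹ := by
        rw [← one_div]
        apply one_div_le_one_div_of_le hs0 (by linarith)
      have hAnn : 0 ≤ 1 / (u + a) - 1 / (u + s) := by
        have : 1 / (u + s) ≤ 1 / (u + a) :=
          one_div_le_one_div_of_le hua (by linarith)
        linarith
      calc c * (2⁻¹ * u⁻¹ - s⁻¹) ≤ c * (1 / (u + a) - 1 / (u + s)) := by
            apply mul_le_mul_of_nonneg_left (by linarith) hc.le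
        _ ≤ Real.sqrt (1 - 4 * m ^ 2 / u) * (1 / (u + a) - 1 / (u + s)) :=
            mul_le_mul_of_nonneg_right hsqrt hAnn
        _ = gR m a s u := rfl
    -- step 3: compute the integral
    have hinv : IntervalIntegrable (fun u : ℝ => u⁻¹) volume u0 s := by
      apply intervalIntegral.intervalIntegrable_inv ?_ continuousOn_id
      intro x hx
      have hx1 : u0 ≤ x := by
        rcases Set.mem_uIcc.mp hx with h | h
        · exact h.1
        · linarith [h.1]
      simp only [id_eq]
      intro h0; rw [h0] at hx1; linarith
    have step3 : ∫ u in Set.Ioc u0 s, c * (2⁻¹ * u⁻¹ - s⁻¹)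
        = c * (2⁻¹ * Real.log (s / u0) - (s - u0) * s⁻¹) := by
      rw [← intervalIntegral.integral_of_le hu0s]
      rw [intervalIntegral.integral_const_mul]
      rw [intervalIntegral.integral_sub ((hinv.const_mul 2⁻¹)) intervalIntegrable_const]
      rw [intervalIntegral.integral_const_mul, integral_inv_of_pos hu0pos hs0,
        intervalIntegral.integral_const, smul_eq_mul]
    have hlog : Real.log (s / u0) = Real.log s - Real.log u0 :=
      Real.log_div (by linarith) (by linarith)
    have hfrac : (s - u0) * s⁻¹ ≤ 1 := by
      calc (s - u0) * s⁻¹ ≤ s * s⁻¹ :=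
            mul_le_mul_of_nonneg_right (by linarith) (by positivity)
        _ = 1 := mul_inv_cancel₀ hs0.ne'
    calc c / 2 * Real.log s - K ≤ c * (2⁻¹ * Real.log (s / u0) - (s - u0) * s⁻¹) := by
          rw [hlog]; nlinarith
      _ = ∫ u in Set.Ioc u0 s, c * (2⁻¹ * u⁻¹ - s⁻¹) := step3.symm
      _ ≤ ∫ u in Set.Ioc u0 s, gR m a s u := step2
      _ ≤ _ := step1
  apply tendsto_atTop_mono' atTop ?_ ?_
  · exact fun s : ℝ => c / 2 * Real.log s - K
  · filter_upwards [eventually_ge_atTop (u0 + 1)] with s hs using hlow s hs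
  · have h1 : Tendsto (fun s : ℝ => c / 2 * Real.log s) atTop atTop :=
      Real.tendsto_log_atTop.const_mul_atTop (by positivity)
    exact (tendsto_atTop_add_const_right atTop (-K) h1).congr (fun s => by ring)
theorem stmt_2 (m a : ℝ) (hm : 0 < m) (ha : -4 * m ^ 2 < a) :
    (∀ s : ℝ, -4 * m ^ 2 < s → (Fa m a (s : ℂ)).im = 0) ∧
    StrictMonoOn (fun s : ℝ => (Fa m a (s : ℂ)).re) (Set.Ioi (-4 * m ^ 2)) ∧
    Filter.Tendsto (fun s : ℝ => (Fa m a (s : ℂ)).re) Filter.atTop Filter.atTop := by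
  have hre : ∀ s : ℝ, (Fa m a (s : ℂ)).re = ∫ u in Set.Ioi (4 * m ^ 2), gR m a s u := by
    intro s; rw [Fa_eq]; exact Complex.ofReal_re _
  refine ⟨?_, ?_, ?_⟩
  · intro s _
    rw [Fa_eq]; exact Complex.ofReal_im _
  · intro s₁ h1 s₂ _ h12
    simp only [hre]
    exact integral_gR_lt m a s₁ s₂ hm ha h1 h12
  · exact (integral_gR_tendsto m a hm ha).congr (fun s => (hre s).symm)
end

section
/- For every complex z not in (-∞, -4m²], the imaginary part of F_a satisfies Im(F_a(z)) = Im(z) · ∫_{4m²}^∞ √(1 - 4m²/u) · (1/|u + z|²) du; consequently Im(F_a(z)) > 0 whenever Im(z) > 0 and Im(F_a(z)) < 0 whenever Im(z) < 0, and Im(F_a(s)) = 0 for real s > -4m². -/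
open MeasureTheory Complex Filter

lemma uz_ne (m : ℝ) {z : ℂ} (hz : z ∉ cutSet m) {u : ℝ} (hu : 4 * m ^ 2 ≤ u) :
    (u : ℂ) + z ≠ 0 := by
  intro h
  apply hz
  have him : z.im = 0 := by have := congrArg Complex.im h; simpa using this
  have hre : u + z.re = 0 := by have := congrArg Complex.re h; simpa using this
  exact ⟨him, by linarith⟩

lemma ua_ne (m a : ℝ) (ha : -4 * m ^ 2 < a) {u : ℝ} (hu : 4 * m ^ 2 ≤ u) :
    (u : ℂ) + (a : ℂ) ≠ 0 := by
  have : ((u + a : ℝ) : ℂ) ≠ 0 := by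
    simp only [ne_eq, Complex.ofReal_eq_zero]; linarith
  simpa using this

lemma integrand_contOn (m a : ℝ) (hm : 0 < m) (ha : -4 * m ^ 2 < a) {z : ℂ}
    (hz : z ∉ cutSet m) :
    ContinuousOn (fun u : ℝ => (Real.sqrt (1 - 4 * m ^ 2 / u) : ℂ) *
      (1 / ((u : ℂ) + (a : ℂ)) - 1 / ((u : ℂ) + z))) (Set.Ici (4 * m ^ 2)) := by
  have hm2 : 0 < 4 * m ^ 2 := by positivity
  apply ContinuousOn.mul
  · apply Complex.continuous_ofReal.comp_continuousOn
    apply Real.continuous_sqrt.comp_continuousOn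
    exact continuousOn_const.sub (continuousOn_const.div continuousOn_id
      (fun u hu => by have : (4:ℝ) * m ^ 2 ≤ u := hu; intro h; simp [h] at this; linarith))
  · apply ContinuousOn.sub
    · exact continuousOn_const.div
        ((Complex.continuous_ofReal.add continuous_const).continuousOn)
        (fun u hu => ua_ne m a ha hu)
    · exact continuousOn_const.div
        ((Complex.continuous_ofReal.add continuous_const).continuousOn)
        (fun u hu => uz_ne m hz hu)

lemma integrand_integrable (m a : ℝ) (hm : 0 < m) (ha : -4 * m ^ 2 < a) {z : ℂ}
    (hz : z ∉ cutSet m) :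
    IntegrableOn (fun u : ℝ => (Real.sqrt (1 - 4 * m ^ 2 / u) : ℂ) *
      (1 / ((u : ℂ) + (a : ℂ)) - 1 / ((u : ℂ) + z))) (Set.Ioi (4 * m ^ 2)) := by
  have hm2 : 0 < 4 * m ^ 2 := by positivity
  set R : ℝ := max (4 * m ^ 2) (2 * (|a| + ‖z‖) + 1) with hR
  have hbR : 4 * m ^ 2 ≤ R := le_max_left _ _
  have hR0 : 0 < R := lt_of_lt_of_le hm2 hbR
  have hRz : 2 * (|a| + ‖z‖) + 1 ≤ R := le_max_right _ _
  rw [← Set.Ioc_union_Ioi_eq_Ioi hbR]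
  apply IntegrableOn.union
  · have := ((integrand_contOn m a hm ha hz).mono
      (Set.Icc_subset_Ici_self : Set.Icc (4 * m ^ 2) R ⊆ Set.Ici (4 * m ^ 2))).integrableOn_Icc (μ := volume)
    exact this.mono_set Set.Ioc_subset_Icc_self
  · have hmeas : AEStronglyMeasurable (fun u : ℝ => (Real.sqrt (1 - 4 * m ^ 2 / u) : ℂ) *
        (1 / ((u : ℂ) + (a : ℂ)) - 1 / ((u : ℂ) + z))) (volume.restrict (Set.Ioi R)) :=
      ((integrand_contOn m a hm ha hz).mono
        (fun u (hu : u ∈ Set.Ioi R) => le_trans hbR hu.le)).aestronglyMeasurable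
        measurableSet_Ioi
    apply Integrable.mono' (g := fun u : ℝ => 4 * ‖z - a‖ * u ^ (-2 : ℝ))
      (((integrableOn_Ioi_rpow_of_lt (by norm_num) hR0).const_mul _)) hmeas
    rw [ae_restrict_iff' measurableSet_Ioi]
    refine ae_of_all _ fun u hu => ?_
    have hu' : R < u := hu
    have hu0 : 0 < u := lt_trans hR0 hu'
    have hub : 4 * m ^ 2 ≤ u := le_trans hbR hu'.le
    have hA : (u : ℂ) + (a : ℂ) ≠ 0 := ua_ne m a ha hub
    have hB : (u : ℂ) + z ≠ 0 := uz_ne m hz hub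
    have hdiff : 1 / ((u : ℂ) + (a : ℂ)) - 1 / ((u : ℂ) + z)
        = (z - (a : ℂ)) / (((u : ℂ) + (a : ℂ)) * ((u : ℂ) + z)) := by
      field_simp
      ring
    have hs1 : |Real.sqrt (1 - 4 * m ^ 2 / u)| ≤ 1 := by
      rw [_root_.abs_of_nonneg (Real.sqrt_nonneg _)]
      have h1 : 1 - 4 * m ^ 2 / u ≤ 1 := by
        have : 0 ≤ 4 * m ^ 2 / u := by positivity
        linarith
      calc Real.sqrt (1 - 4 * m ^ 2 / u) ≤ Real.sqrt 1 := Real.sqrt_le_sqrt h1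
        _ = 1 := Real.sqrt_one
    have hAbound : u / 2 ≤ ‖(u : ℂ) + (a : ℂ)‖ := by
      have : ‖(u : ℂ) + (a : ℂ)‖ = |u + a| := by
        rw [show (u : ℂ) + (a : ℂ) = ((u + a : ℝ) : ℂ) by push_cast; ring, Complex.norm_real, Real.norm_eq_abs]
      rw [this]
      have h1 : u - |a| ≤ u + a := by
        have := neg_abs_le a; linarith
      have h2 : u / 2 ≤ u - |a| := by
        have := norm_nonneg z; linarith
      exact le_trans h2 (le_trans h1 (le_abs_self _))
    have hBbound : u / 2 ≤ ‖(u : ℂ) + z‖ := by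
      have h1 : u - ‖z‖ ≤ ‖(u : ℂ) + z‖ := by
        have := norm_add_le ((u : ℂ) + z) (-z)
        simp only [add_neg_cancel_right, norm_neg] at this
        have hu2 : ‖(u : ℂ)‖ = u := by
          rw [Complex.norm_real, Real.norm_eq_abs, abs_of_pos hu0]
        linarith [this, hu2.le, hu2.ge]
      have h2 : u / 2 ≤ u - ‖z‖ := by
        have := abs_nonneg a; linarith
      linarith
    calc ‖(Real.sqrt (1 - 4 * m ^ 2 / u) : ℂ) *
          (1 / ((u : ℂ) + (a : ℂ)) - 1 / ((u : ℂ) + z))‖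
        = |Real.sqrt (1 - 4 * m ^ 2 / u)| *
            (‖z - (a : ℂ)‖ / (‖(u : ℂ) + (a : ℂ)‖ *
              ‖(u : ℂ) + z‖)) := by
          rw [hdiff]
          simp [norm_mul, norm_div, Complex.norm_real]
      _ ≤ 1 * (‖z - (a : ℂ)‖ / (u / 2 * (u / 2))) := by
          apply mul_le_mul hs1 _ (by positivity) zero_le_one
          apply div_le_div_of_nonneg_left (norm_nonneg _) (by positivity)
          exact mul_le_mul hAbound hBbound (by positivity) (norm_nonneg _)
      _ = 4 * ‖z - a‖ * u ^ (-2 : ℝ) := by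
          rw [show (-2 : ℝ) = -(2 : ℕ) by norm_num, Real.rpow_neg hu0.le, Real.rpow_natCast]
          field_simp
          ring

lemma im_integrand (z : ℂ) (a r u : ℝ) :
    ((r : ℂ) * (1 / ((u : ℂ) + (a : ℂ)) - 1 / ((u : ℂ) + z))).im
      = z.im * (r * (1 / ‖(u : ℂ) + z‖ ^ 2)) := by
  simp only [one_div, Complex.im_ofReal_mul, Complex.sub_im, Complex.inv_im,
    Complex.add_im, Complex.ofReal_im, Complex.sq_norm]
  simp [Complex.normSq_apply, Complex.add_re, Complex.add_im]
  ring

lemma Fa_real_im (m a : ℝ) (s : ℝ) : (Fa m a (s : ℂ)).im = 0 := by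
  rw [Fa]
  have h : (fun u : ℝ => (Real.sqrt (1 - 4 * m ^ 2 / u) : ℂ) *
      (1 / ((u : ℂ) + (a : ℂ)) - 1 / ((u : ℂ) + (s : ℂ))))
      = fun u : ℝ => ((Real.sqrt (1 - 4 * m ^ 2 / u) * (1 / (u + a) - 1 / (u + s)) : ℝ) : ℂ) := by
    funext u; push_cast; ring
  rw [h]
  rw [show (∫ u in Set.Ioi (4 * m ^ 2),
      ((Real.sqrt (1 - 4 * m ^ 2 / u) * (1 / (u + a) - 1 / (u + s)) : ℝ) : ℂ))
    = ((∫ u in Set.Ioi (4 * m ^ 2),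
      Real.sqrt (1 - 4 * m ^ 2 / u) * (1 / (u + a) - 1 / (u + s)) : ℝ) : ℂ) from
    integral_ofReal, Complex.ofReal_im]

theorem stmt_3 (m a : ℝ) (hm : 0 < m) (ha : -4 * m ^ 2 < a) :
    ∀ z : ℂ, z ∉ cutSet m →
      ((Fa m a z).im = z.im * ∫ u in Set.Ioi (4 * m ^ 2),
          Real.sqrt (1 - 4 * m ^ 2 / u) * (1 / ‖(u : ℂ) + z‖ ^ 2)) ∧
      (0 < z.im → 0 < (Fa m a z).im) ∧
      (z.im < 0 → (Fa m a z).im < 0) ∧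
      (∀ s : ℝ, -4 * m ^ 2 < s → (Fa m a (s : ℂ)).im = 0) := by
  intro z hz
  have hm2 : 0 < 4 * m ^ 2 := by positivity
  have hmain : (Fa m a z).im = z.im * ∫ u in Set.Ioi (4 * m ^ 2),
      Real.sqrt (1 - 4 * m ^ 2 / u) * (1 / ‖(u : ℂ) + z‖ ^ 2) := by
    by_cases him : z.im = 0
    · have hzre : z = (z.re : ℂ) := Complex.ext (by simp) (by simp [him])
      rw [him, zero_mul, hzre, Fa_real_im]
    · have hInt := integrand_integrable m a hm ha hz
      have h1 : (Fa m a z).im = ∫ u in Set.Ioi (4 * m ^ 2),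
          ((Real.sqrt (1 - 4 * m ^ 2 / u) : ℂ) *
            (1 / ((u : ℂ) + (a : ℂ)) - 1 / ((u : ℂ) + z))).im := by
        rw [Fa]
        rw [show (∫ u in Set.Ioi (4 * m ^ 2), ((Real.sqrt (1 - 4 * m ^ 2 / u) : ℂ) *
            (1 / ((u : ℂ) + (a : ℂ)) - 1 / ((u : ℂ) + z))).im)
          = ∫ u in Set.Ioi (4 * m ^ 2), RCLike.im ((Real.sqrt (1 - 4 * m ^ 2 / u) : ℂ) *
            (1 / ((u : ℂ) + (a : ℂ)) - 1 / ((u : ℂ) + z))) from rfl, integral_im hInt]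
        rfl
      rw [h1]
      have h2 : ∀ u : ℝ, ((Real.sqrt (1 - 4 * m ^ 2 / u) : ℂ) *
            (1 / ((u : ℂ) + (a : ℂ)) - 1 / ((u : ℂ) + z))).im
          = z.im * (Real.sqrt (1 - 4 * m ^ 2 / u) * (1 / ‖(u : ℂ) + z‖ ^ 2)) :=
        fun u => im_integrand z a _ u
      calc ∫ u in Set.Ioi (4 * m ^ 2), ((Real.sqrt (1 - 4 * m ^ 2 / u) : ℂ) *
            (1 / ((u : ℂ) + (a : ℂ)) - 1 / ((u : ℂ) + z))).im
          = ∫ u in Set.Ioi (4 * m ^ 2), z.im * (Real.sqrt (1 - 4 * m ^ 2 / u) *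
              (1 / ‖(u : ℂ) + z‖ ^ 2)) := by
            exact integral_congr_ae (ae_of_all _ fun u => h2 u)
        _ = z.im * ∫ u in Set.Ioi (4 * m ^ 2), Real.sqrt (1 - 4 * m ^ 2 / u) *
              (1 / ‖(u : ℂ) + z‖ ^ 2) := integral_const_mul _ _
  refine ⟨hmain, ?_, ?_, fun s _ => Fa_real_im m a s⟩ <;> intro hzim
  all_goals {
    have him : z.im ≠ 0 := by intro h; rw [h] at hzim; exact lt_irrefl 0 hzim
    have hInt := integrand_integrable m a hm ha hz
    have hIntIm := hInt.im
    have hH : IntegrableOn (fun u : ℝ => Real.sqrt (1 - 4 * m ^ 2 / u) *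
        (1 / ‖(u : ℂ) + z‖ ^ 2)) (Set.Ioi (4 * m ^ 2)) := by
      have h0 := hIntIm.const_mul (z.im)⁻¹
      apply IntegrableOn.congr_fun h0 ?_ measurableSet_Ioi
      intro u _
      show (z.im)⁻¹ * ((Real.sqrt (1 - 4 * m ^ 2 / u) : ℂ) *
        (1 / ((u : ℂ) + (a : ℂ)) - 1 / ((u : ℂ) + z))).im = _
      rw [im_integrand z a _ u, ← mul_assoc, inv_mul_cancel₀ him, one_mul]
    have hpos : 0 < ∫ u in Set.Ioi (4 * m ^ 2), Real.sqrt (1 - 4 * m ^ 2 / u) *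
        (1 / ‖(u : ℂ) + z‖ ^ 2) := by
      have hnn : (0 : ℝ → ℝ) ≤ᶠ[ae (volume.restrict (Set.Ioi (4 * m ^ 2)))]
          fun u => Real.sqrt (1 - 4 * m ^ 2 / u) * (1 / ‖(u : ℂ) + z‖ ^ 2) :=
        ae_of_all _ fun u => by positivity
      rw [setIntegral_pos_iff_support_of_nonneg_ae hnn hH]
      have hsub : Set.Ioi (4 * m ^ 2) ⊆ Function.support
          (fun u => Real.sqrt (1 - 4 * m ^ 2 / u) * (1 / ‖(u : ℂ) + z‖ ^ 2))
          ∩ Set.Ioi (4 * m ^ 2) := by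
        intro u hu
        refine ⟨?_, hu⟩
        have hu' : 4 * m ^ 2 < u := hu
        have hs : 0 < Real.sqrt (1 - 4 * m ^ 2 / u) := by
          apply Real.sqrt_pos.2
          rw [sub_pos, div_lt_one (lt_trans hm2 hu')]
          exact hu'
        have habs : 0 < ‖(u : ℂ) + z‖ :=
          norm_pos_iff.2 (uz_ne m hz hu'.le)
        simp only [Function.mem_support]
        positivity
      calc (0 : ENNReal) < volume (Set.Ioi (4 * m ^ 2)) := by
            rw [Real.volume_Ioi]; exact ENNReal.zero_lt_top
        _ ≤ _ := measure_mono hsub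
    rw [hmain]
    first
      | exact mul_pos hzim hpos
      | exact mul_neg_of_neg_of_pos hzim hpos
  }
end

section
/- The restriction of F_a to (-4m², ∞) is twice differentiable, its second derivative at s ∈ (-4m², ∞) equals −2 ∫_{4m²}^∞ √(1 - 4m²/u) · (u + s)^{-3} du, which is strictly negative; in particular F_a is strictly concave on (-4m², ∞). -/
open MeasureTheory Complex Filter Metric

lemma aux_int_pow {k : ℕ} (hk : 1 ≤ k) {b c : ℝ} (hbc : 0 < b + c) :
    IntegrableOn (fun u : ℝ => ((u + c) ^ (k+1))⁻¹) (Set.Ioi b) := by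
  obtain ⟨j, rfl⟩ : ∃ j, k = j + 1 := ⟨k-1, (Nat.succ_pred_eq_of_pos hk).symm⟩
  have hderiv : ∀ u ∈ Set.Ioi b, HasDerivAt (fun u : ℝ => -(((j:ℝ)+1) * (u + c) ^ (j+1))⁻¹)
      (((u + c) ^ (j+1+1))⁻¹) u := by
    intro u hu
    have hu' : b ≤ u := le_of_lt hu
    have hpos : 0 < u + c := by linarith
    have h1 : HasDerivAt (fun u : ℝ => (u + c) ^ (j+1)) (((j:ℝ)+1) * (u + c) ^ j) u := by
      have := ((hasDerivAt_id u).add_const c).pow (j+1)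
      simpa [Pi.pow_def] using this
    have h3 := ((h1.const_mul ((j:ℝ)+1)).inv (by positivity)).neg
    refine h3.congr_deriv ?_
    have hne : u + c ≠ 0 := ne_of_gt hpos
    have hj0 : ((j:ℝ)+1) ≠ 0 := by positivity
    field_simp
    ring
  have hg0 : Tendsto (fun u : ℝ => -(((j:ℝ)+1) * (u + c) ^ (j+1))⁻¹) atTop (nhds 0) := by
    rw [← neg_zero]
    apply Tendsto.neg
    apply Tendsto.inv_tendsto_atTop
    apply Tendsto.const_mul_atTop (by positivity : (0:ℝ) < (j:ℝ)+1)
    exact (tendsto_pow_atTop (by omega)).comp (tendsto_atTop_add_const_right _ c tendsto_id)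
  refine integrableOn_Ioi_deriv_of_nonneg ?_ hderiv (fun u hu => by
    have : 0 < u + c := by have := hu.out; linarith
    positivity) hg0
  · apply ContinuousAt.continuousWithinAt
    have hpos : 0 < b + c := hbc
    fun_prop (disch := positivity)

lemma aux_re (m a t : ℝ) :
    (∫ u in Set.Ioi (4 * m ^ 2), (Real.sqrt (1 - 4 * m ^ 2 / u) : ℂ) *
      (1 / ((u : ℂ) + (a : ℂ)) - 1 / ((u : ℂ) + (t : ℂ)))).re
    = ∫ u in Set.Ioi (4 * m ^ 2), Real.sqrt (1 - 4 * m ^ 2 / u) * (1/(u+a) - 1/(u+t)) := by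
  have h : ∀ u : ℝ, (Real.sqrt (1 - 4 * m ^ 2 / u) : ℂ) *
      (1 / ((u : ℂ) + (a : ℂ)) - 1 / ((u : ℂ) + (t : ℂ)))
      = ((Real.sqrt (1 - 4 * m ^ 2 / u) * (1/(u+a) - 1/(u+t)) : ℝ) : ℂ) := by
    intro u; push_cast; ring
  rw [show (fun u : ℝ => (Real.sqrt (1 - 4 * m ^ 2 / u) : ℂ) *
      (1 / ((u : ℂ) + (a : ℂ)) - 1 / ((u : ℂ) + (t : ℂ))))
      = (fun u : ℝ => RCLike.ofReal (K := ℂ)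
          (Real.sqrt (1 - 4 * m ^ 2 / u) * (1/(u+a) - 1/(u+t)))) from funext h,
    integral_ofReal (𝕜 := ℂ)]
  simp [RCLike.ofReal_re]

lemma aux_w_pos {m u : ℝ} (hm : 0 < m) (hu : 4 * m ^ 2 < u) :
    0 < Real.sqrt (1 - 4 * m ^ 2 / u) := by
  have h0 : (0:ℝ) < 4 * m ^ 2 := by positivity
  have hu0 : 0 < u := h0.trans hu
  have : 4 * m ^ 2 / u < 1 := (div_lt_one hu0).2 hu
  exact Real.sqrt_pos.2 (by linarith)

lemma aux_w_le_one {m u : ℝ} (hu : 4 * m ^ 2 < u) (hm : 0 < m) :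
    Real.sqrt (1 - 4 * m ^ 2 / u) ≤ 1 := by
  have h0 : (0:ℝ) < 4 * m ^ 2 := by positivity
  have hu0 : 0 < u := h0.trans hu
  have : 0 ≤ 4 * m ^ 2 / u := by positivity
  exact Real.sqrt_le_one.2 (by linarith)

lemma aux_meas1 (m t : ℝ) (k : ℕ) :
    Measurable (fun u : ℝ => Real.sqrt (1 - 4 * m ^ 2 / u) * ((u + t) ^ k)⁻¹) :=
  ((measurable_const.sub (measurable_const.div measurable_id)).sqrt).mul
    (((measurable_id.add_const t).pow_const k).inv)

lemma aux_meas2 (m a t : ℝ) :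
    Measurable (fun u : ℝ => Real.sqrt (1 - 4 * m ^ 2 / u) * (1/(u+a) - 1/(u+t))) :=
  ((measurable_const.sub (measurable_const.div measurable_id)).sqrt).mul
    ((measurable_const.div (measurable_id.add_const a)).sub
      (measurable_const.div (measurable_id.add_const t)))

lemma aux_intW {m : ℝ} (hm : 0 < m) {t : ℝ} (ht : -(4 * m ^ 2) < t) {k : ℕ} (hk : 1 ≤ k) :
    IntegrableOn (fun u : ℝ => Real.sqrt (1 - 4 * m ^ 2 / u) * ((u + t) ^ (k+1))⁻¹)
      (Set.Ioi (4 * m ^ 2)) := by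
  refine Integrable.mono (aux_int_pow hk (show 0 < 4 * m ^ 2 + t by linarith))
    ((aux_meas1 m t (k+1)).aestronglyMeasurable) ?_
  rw [ae_restrict_iff' measurableSet_Ioi]
  filter_upwards with u hu
  have hu' : 4 * m ^ 2 < u := hu
  have hpos : 0 < u + t := by linarith
  have h1 : 0 ≤ Real.sqrt (1 - 4 * m ^ 2 / u) := Real.sqrt_nonneg _
  have h2 : (0:ℝ) < ((u + t) ^ (k+1))⁻¹ := by positivity
  rw [Real.norm_eq_abs, Real.norm_eq_abs, _root_.abs_of_nonneg (mul_nonneg h1 h2.le),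
    _root_.abs_of_nonneg h2.le]
  calc Real.sqrt (1 - 4 * m ^ 2 / u) * ((u + t) ^ (k+1))⁻¹
      ≤ 1 * ((u + t) ^ (k+1))⁻¹ := by
        apply mul_le_mul_of_nonneg_right (aux_w_le_one hu' hm) (le_of_lt h2)
    _ = ((u + t) ^ (k+1))⁻¹ := one_mul _

lemma aux_intG {m a t : ℝ} (hm : 0 < m) (ha : -(4 * m ^ 2) < a) (ht : -(4 * m ^ 2) < t) :
    IntegrableOn (fun u : ℝ => Real.sqrt (1 - 4 * m ^ 2 / u) * (1/(u+a) - 1/(u+t)))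
      (Set.Ioi (4 * m ^ 2)) := by
  set c := min a t with hc
  have hbc : 0 < 4 * m ^ 2 + c := by
    rcases le_total a t with h | h
    · simp [hc, min_eq_left h]; linarith
    · simp [hc, min_eq_right h]; linarith
  refine Integrable.mono (((aux_int_pow (k := 1) le_rfl hbc)).const_mul |t - a|)
    ((aux_meas2 m a t).aestronglyMeasurable) ?_
  rw [ae_restrict_iff' measurableSet_Ioi]
  filter_upwards with u hu
  have hu' : 4 * m ^ 2 < u := hu
  have hca : 0 < u + a := by linarith
  have hct : 0 < u + t := by linarith
  have hcc : 0 < u + c := by linarith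
  have key : 1/(u+a) - 1/(u+t) = (t - a) / ((u+a)*(u+t)) := by
    field_simp
    ring
  have h0 : 0 ≤ Real.sqrt (1 - 4 * m ^ 2 / u) := Real.sqrt_nonneg _
  rw [Real.norm_eq_abs, Real.norm_eq_abs, key,
    _root_.abs_of_nonneg (by positivity : (0:ℝ) ≤ |t-a| * ((u + c)^(1+1))⁻¹),
    _root_.abs_mul, _root_.abs_of_nonneg h0, _root_.abs_div, _root_.abs_of_pos (mul_pos hca hct)]
  have hsq : (u + c)^(1+1) ≤ (u+a)*(u+t) := by
    have h1 : u + c ≤ u + a := by have := min_le_left a t; linarith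
    have h2 : u + c ≤ u + t := by have := min_le_right a t; linarith
    calc (u+c)^(1+1) = (u+c)*(u+c) := by ring
      _ ≤ (u+a)*(u+t) := mul_le_mul h1 h2 (le_of_lt hcc) (le_of_lt hca)
  have hW : Real.sqrt (1 - 4 * m ^ 2 / u) ≤ 1 := aux_w_le_one hu' hm
  calc Real.sqrt (1 - 4 * m ^ 2 / u) * (|t - a| / ((u+a)*(u+t)))
      ≤ 1 * (|t - a| / ((u+a)*(u+t))) := by
        apply mul_le_mul_of_nonneg_right hW (by positivity)
    _ = |t - a| / ((u+a)*(u+t)) := one_mul _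
    _ ≤ |t - a| * ((u + c)^(1+1))⁻¹ := by
        rw [div_eq_mul_inv]
        apply mul_le_mul_of_nonneg_left _ (abs_nonneg _)
        exact inv_anti₀ (by positivity) hsq

lemma aux_deriv1 {m a s : ℝ} (hm : 0 < m) (ha : -(4 * m ^ 2) < a) (hs : -(4 * m ^ 2) < s) :
    HasDerivAt (fun t : ℝ => ∫ u in Set.Ioi (4 * m ^ 2),
        Real.sqrt (1 - 4 * m ^ 2 / u) * (1/(u+a) - 1/(u+t)))
      (∫ u in Set.Ioi (4 * m ^ 2), Real.sqrt (1 - 4 * m ^ 2 / u) * ((u + s) ^ 2)⁻¹) s := by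
  set ε : ℝ := (s + 4 * m ^ 2) / 2 with hε
  have hε_pos : 0 < ε := by simp only [hε]; linarith
  have hkey : 4 * m ^ 2 + (s - ε) = ε := by simp only [hε]; ring
  have h_bound : ∀ᵐ u ∂(volume.restrict (Set.Ioi (4 * m ^ 2))), ∀ x ∈ ball s ε,
      ‖Real.sqrt (1 - 4 * m ^ 2 / u) * ((u + x) ^ 2)⁻¹‖ ≤ ((u + (s - ε)) ^ 2)⁻¹ := ?_
  have h_diff : ∀ᵐ u ∂(volume.restrict (Set.Ioi (4 * m ^ 2))), ∀ x ∈ ball s ε,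
      HasDerivAt (fun t : ℝ => Real.sqrt (1 - 4 * m ^ 2 / u) * (1/(u+a) - 1/(u+t)))
        (Real.sqrt (1 - 4 * m ^ 2 / u) * ((u + x) ^ 2)⁻¹) x := ?_
  exact (hasDerivAt_integral_of_dominated_loc_of_deriv_le (ball_mem_nhds s hε_pos)
    (Eventually.of_forall fun x => (aux_meas2 m a x).aestronglyMeasurable)
    (aux_intG hm ha hs) ((aux_meas1 m s 2).aestronglyMeasurable)
    h_bound (aux_int_pow (k := 1) le_rfl (by rw [hkey]; exact hε_pos)) h_diff).2
  · rw [ae_restrict_iff' measurableSet_Ioi]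
    filter_upwards with u hu
    intro x hx
    have hu' : 4 * m ^ 2 < u := hu
    have hx' : s - ε < x := by
      have := abs_lt.1 (mem_ball_iff_norm.1 hx); linarith [this.1]
    have h2 : 0 < u + x := by linarith [hε_pos, hkey]
    have hinv : HasDerivAt (fun y : ℝ => (u + y)⁻¹) (-1 / (u + x) ^ 2) x := by
      simpa [Pi.inv_def] using ((hasDerivAt_id x).const_add u).inv (ne_of_gt h2)
    have h3 := (hinv.const_sub (1/(u+a))).const_mul (Real.sqrt (1 - 4 * m ^ 2 / u))
    simp only [one_div] at h3 ⊢
    refine h3.congr_deriv ?_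
    ring
  · rw [ae_restrict_iff' measurableSet_Ioi]
    filter_upwards with u hu
    intro x hx
    have hu' : 4 * m ^ 2 < u := hu
    have hx' : s - ε < x := by
      have := abs_lt.1 (mem_ball_iff_norm.1 hx); linarith [this.1]
    have h1 : 0 < u + (s - ε) := by linarith
    have h2 : 0 < u + x := by linarith
    rw [Real.norm_eq_abs, _root_.abs_of_nonneg
      (mul_nonneg (Real.sqrt_nonneg _) (by positivity))]
    calc Real.sqrt (1 - 4 * m ^ 2 / u) * ((u + x) ^ 2)⁻¹
        ≤ 1 * ((u + x) ^ 2)⁻¹ :=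
          mul_le_mul_of_nonneg_right (aux_w_le_one hu' hm) (by positivity)
      _ = ((u + x) ^ 2)⁻¹ := one_mul _
      _ ≤ ((u + (s - ε)) ^ 2)⁻¹ := by
          apply inv_anti₀ (by positivity)
          exact pow_le_pow_left₀ h1.le (by linarith) 2

lemma aux_deriv2 {m s : ℝ} (hm : 0 < m) (hs : -(4 * m ^ 2) < s) :
    HasDerivAt (fun t : ℝ => ∫ u in Set.Ioi (4 * m ^ 2),
        Real.sqrt (1 - 4 * m ^ 2 / u) * ((u + t) ^ 2)⁻¹)
      (∫ u in Set.Ioi (4 * m ^ 2),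
        (-2) * (Real.sqrt (1 - 4 * m ^ 2 / u) * ((u + s) ^ 3)⁻¹)) s := by
  set ε : ℝ := (s + 4 * m ^ 2) / 2 with hε
  have hε_pos : 0 < ε := by simp only [hε]; linarith
  have hkey : 4 * m ^ 2 + (s - ε) = ε := by simp only [hε]; ring
  have h_bound : ∀ᵐ u ∂(volume.restrict (Set.Ioi (4 * m ^ 2))), ∀ x ∈ ball s ε,
      ‖(-2 : ℝ) * (Real.sqrt (1 - 4 * m ^ 2 / u) * ((u + x) ^ 3)⁻¹)‖
        ≤ 2 * ((u + (s - ε)) ^ 3)⁻¹ := ?_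
  have h_diff : ∀ᵐ u ∂(volume.restrict (Set.Ioi (4 * m ^ 2))), ∀ x ∈ ball s ε,
      HasDerivAt (fun t : ℝ => Real.sqrt (1 - 4 * m ^ 2 / u) * ((u + t) ^ 2)⁻¹)
        ((-2) * (Real.sqrt (1 - 4 * m ^ 2 / u) * ((u + x) ^ 3)⁻¹)) x := ?_
  exact (hasDerivAt_integral_of_dominated_loc_of_deriv_le (ball_mem_nhds s hε_pos)
    (Eventually.of_forall fun x => (aux_meas1 m x 2).aestronglyMeasurable)
    (aux_intW hm hs (k := 1) le_rfl)
    (((aux_meas1 m s 3).const_mul (-2)).aestronglyMeasurable)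
    h_bound ((aux_int_pow (k := 2) (by norm_num) (by rw [hkey]; exact hε_pos)).const_mul 2)
    h_diff).2
  · rw [ae_restrict_iff' measurableSet_Ioi]
    filter_upwards with u hu
    intro x hx
    have hu' : 4 * m ^ 2 < u := hu
    have hx' : s - ε < x := by
      have := abs_lt.1 (mem_ball_iff_norm.1 hx); linarith [this.1]
    have h2 : 0 < u + x := by linarith [hε_pos, hkey]
    have hpow : HasDerivAt (fun y : ℝ => (u + y) ^ 2) (2 * (u + x)) x := by
      simpa [Pi.pow_def] using ((hasDerivAt_id x).const_add u).pow 2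
    have h3 := (hpow.inv (by positivity)).const_mul (Real.sqrt (1 - 4 * m ^ 2 / u))
    refine h3.congr_deriv ?_
    have hne : u + x ≠ 0 := ne_of_gt h2
    field_simp
  · rw [ae_restrict_iff' measurableSet_Ioi]
    filter_upwards with u hu
    intro x hx
    have hu' : 4 * m ^ 2 < u := hu
    have hx' : s - ε < x := by
      have := abs_lt.1 (mem_ball_iff_norm.1 hx); linarith [this.1]
    have h1 : 0 < u + (s - ε) := by linarith
    have h2 : 0 < u + x := by linarith
    have hw0 : 0 ≤ Real.sqrt (1 - 4 * m ^ 2 / u) := Real.sqrt_nonneg _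
    rw [Real.norm_eq_abs, _root_.abs_mul, _root_.abs_of_nonneg
      (mul_nonneg hw0 (by positivity : (0:ℝ) ≤ ((u + x) ^ 3)⁻¹))]
    have : |(-2 : ℝ)| = 2 := by norm_num
    rw [this]
    apply mul_le_mul_of_nonneg_left _ (by norm_num : (0:ℝ) ≤ 2)
    calc Real.sqrt (1 - 4 * m ^ 2 / u) * ((u + x) ^ 3)⁻¹
        ≤ 1 * ((u + x) ^ 3)⁻¹ :=
          mul_le_mul_of_nonneg_right (aux_w_le_one hu' hm) (by positivity)
      _ = ((u + x) ^ 3)⁻¹ := one_mul _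
      _ ≤ ((u + (s - ε)) ^ 3)⁻¹ := by
          apply inv_anti₀ (by positivity)
          exact pow_le_pow_left₀ h1.le (by linarith) 3

theorem stmt_6 (m a : ℝ) (hm : 0 < m) (ha : -4 * m ^ 2 < a) :
    (∀ s ∈ Set.Ioi (-4 * m ^ 2 : ℝ),
      DifferentiableAt ℝ (fun t : ℝ => (Fa m a (t : ℂ)).re) s ∧
      HasDerivAt (deriv (fun t : ℝ => (Fa m a (t : ℂ)).re))
        (-2 * ∫ u in Set.Ioi (4 * m ^ 2),
          Real.sqrt (1 - 4 * m ^ 2 / u) * ((u + s) ^ 3)⁻¹) s ∧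
      (-2 * ∫ u in Set.Ioi (4 * m ^ 2),
          Real.sqrt (1 - 4 * m ^ 2 / u) * ((u + s) ^ 3)⁻¹) < 0) ∧
    StrictConcaveOn ℝ (Set.Ioi (-4 * m ^ 2)) (fun t : ℝ => (Fa m a (t : ℂ)).re) := by
  have hc0 : (0:ℝ) < 4 * m ^ 2 := by positivity
  have ha' : -(4 * m ^ 2) < a := by linarith
  have hfeq : (fun t : ℝ => (Fa m a (t : ℂ)).re)
      = fun t : ℝ => ∫ u in Set.Ioi (4 * m ^ 2),
          Real.sqrt (1 - 4 * m ^ 2 / u) * (1/(u+a) - 1/(u+t)) := funext (aux_re m a)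
  set g1 : ℝ → ℝ := fun t => ∫ u in Set.Ioi (4 * m ^ 2),
      Real.sqrt (1 - 4 * m ^ 2 / u) * ((u + t) ^ 2)⁻¹ with hg1
  have hd1 : ∀ s ∈ Set.Ioi (-4 * m ^ 2 : ℝ),
      HasDerivAt (fun t : ℝ => (Fa m a (t : ℂ)).re) (g1 s) s := by
    intro s hs
    rw [hfeq]
    exact aux_deriv1 hm ha' (by simp only [Set.mem_Ioi] at hs; linarith)
  have hderiv_eq : ∀ s ∈ Set.Ioi (-4 * m ^ 2 : ℝ),
      deriv (fun t : ℝ => (Fa m a (t : ℂ)).re) s = g1 s := fun s hs => (hd1 s hs).deriv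
  have hd2 : ∀ s ∈ Set.Ioi (-4 * m ^ 2 : ℝ),
      HasDerivAt (deriv fun t : ℝ => (Fa m a (t : ℂ)).re)
        (-2 * ∫ u in Set.Ioi (4 * m ^ 2),
          Real.sqrt (1 - 4 * m ^ 2 / u) * ((u + s) ^ 3)⁻¹) s := by
    intro s hs
    have hs' : -(4 * m ^ 2) < s := by simp only [Set.mem_Ioi] at hs; linarith
    have h2 := aux_deriv2 hm hs'
    rw [integral_const_mul] at h2
    have hmem : Set.Ioi (-4 * m ^ 2 : ℝ) ∈ nhds s := isOpen_Ioi.mem_nhds hs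
    have heq : deriv (fun t : ℝ => (Fa m a (t : ℂ)).re) =ᶠ[nhds s] g1 :=
      eventually_of_mem hmem fun t ht => hderiv_eq t ht
    exact h2.congr_of_eventuallyEq heq
  have hI : ∀ s ∈ Set.Ioi (-4 * m ^ 2 : ℝ),
      0 < ∫ u in Set.Ioi (4 * m ^ 2),
        Real.sqrt (1 - 4 * m ^ 2 / u) * ((u + s) ^ 3)⁻¹ := by
    intro s hs
    have hs' : -(4 * m ^ 2) < s := by simp only [Set.mem_Ioi] at hs; linarith
    have hint : IntegrableOn (fun u : ℝ => Real.sqrt (1 - 4 * m ^ 2 / u) * ((u + s) ^ 3)⁻¹)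
        (Set.Ioi (4 * m ^ 2)) := aux_intW hm hs' (k := 2) (by norm_num)
    refine (setIntegral_pos_iff_support_of_nonneg_ae ?_ hint).2 ?_
    · filter_upwards [ae_restrict_mem measurableSet_Ioi] with u hu
      have hu' : 4 * m ^ 2 < u := hu
      have : 0 < u + s := by linarith
      positivity
    · have hsub : Set.Ioi (4 * m ^ 2) ⊆
          Function.support fun u => Real.sqrt (1 - 4 * m ^ 2 / u) * ((u + s) ^ 3)⁻¹ := by
        intro u hu
        have hu' : 4 * m ^ 2 < u := hu
        have h1 : 0 < u + s := by linarith
        exact ne_of_gt (mul_pos (aux_w_pos hm hu') (by positivity))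
      rw [Set.inter_eq_right.2 hsub]
      simp [Real.volume_Ioi]
  refine ⟨fun s hs => ⟨(hd1 s hs).differentiableAt, hd2 s hs, ?_⟩, ?_⟩
  · have := hI s hs; nlinarith
  · apply strictConcaveOn_of_deriv2_neg (convex_Ioi _)
    · exact fun x hx => ((hd1 x hx).differentiableAt.continuousAt).continuousWithinAt
    · intro x hx
      rw [interior_Ioi] at hx
      have hx' := (hd2 x hx).deriv
      have hiter : deriv^[2] (fun t : ℝ => (Fa m a (t : ℂ)).re)
          = deriv (deriv fun t : ℝ => (Fa m a (t : ℂ)).re) := rfl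
      rw [hiter, hx']
      have := hI x hx; nlinarith
end

section
/- Assume that at least one of λ₁, λ₂ is nonzero and that g₂λ₁ − λ₂g₁ ≥ 0. Then every complex number z in the domain ℂ \ (-∞, -4m²] with S(z) = 0 is real, i.e. every such zero lies in the real interval (-4m², ∞). -/
open MeasureTheory Complex Filter Set

/-- The function `S(z) = -(λ₁ + λ₂ z) κ F_a(z) - (g₁ + g₂ z)`. -/
noncomputable def Sfun (m a κ g₁ g₂ l₁ l₂ : ℝ) (z : ℂ) : ℂ :=
  -((l₁ : ℂ) + (l₂ : ℂ) * z) * (κ : ℂ) * Fa m a z - ((g₁ : ℂ) + (g₂ : ℂ) * z)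
/-- key analytic lemma -/
lemma Fa_im_key (m a : ℝ) (z : ℂ) (hm : 0 < m) (ha : -4 * m ^ 2 < a)
    (hz : z.im ≠ 0 ∨ -4 * m ^ 2 < z.re) (him : z.im ≠ 0) :
    0 < z.im * (Fa m a z).im := by
  set b : ℝ := 4 * m ^ 2 with hbdef
  have hb0 : 0 < b := by positivity
  set f : ℝ → ℂ := fun u => (Real.sqrt (1 - 4 * m ^ 2 / u) : ℂ) *
      (1 / ((u : ℂ) + (a : ℂ)) - 1 / ((u : ℂ) + z)) with hfdef
  -- denominators nonzero
  have hqne : ∀ u : ℝ, b ≤ u → ((u : ℂ) + z) ≠ 0 := by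
    intro u hu h
    have h1 : z.im = 0 := by
      have := congrArg Complex.im h; simpa using this
    have h2 : u + z.re = 0 := by
      have := congrArg Complex.re h; simpa using this
    rcases hz with h3 | h3
    · exact h3 h1
    · linarith
  have hpne : ∀ u : ℝ, b ≤ u → ((u : ℂ) + (a : ℂ)) ≠ 0 := by
    intro u hu h
    have h2 : u + a = 0 := by
      have := congrArg Complex.re h; simpa using this
    linarith
  -- continuity on Ici b
  have hcont : ContinuousOn f (Ici b) := by
    apply ContinuousOn.mul
    · apply Complex.continuous_ofReal.comp_continuousOn
      apply Real.continuous_sqrt.comp_continuousOn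
      exact continuousOn_const.sub (continuousOn_const.div continuousOn_id
        (fun u hu => ne_of_gt (lt_of_lt_of_le hb0 hu)))
    · apply ContinuousOn.sub
      · simp only [one_div]
        exact ((Complex.continuous_ofReal.continuousOn.add continuousOn_const).inv₀
          (fun u hu => hpne u hu))
      · simp only [one_div]
        exact ((Complex.continuous_ofReal.continuousOn.add continuousOn_const).inv₀
          (fun u hu => hqne u hu))
  -- integrability
  set R : ℝ := max (2 * b) (2 * ‖z‖ + 1) with hRdef
  have hbR : b ≤ R := le_trans (by linarith) (le_max_left _ _)
  have hR0 : 0 < R := lt_of_lt_of_le hb0 hbR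
  have hint : IntegrableOn f (Ioi b) := by
    have h1 : IntegrableOn f (Icc b R) :=
      (hcont.mono Icc_subset_Ici_self).integrableOn_compact isCompact_Icc
    have h2 : IntegrableOn f (Ioi R) := by
      have hg : IntegrableOn (fun u : ℝ => (4 * ‖z - (a:ℂ)‖) * u ^ (-2 : ℝ)) (Ioi R) :=
        (integrableOn_Ioi_rpow_of_lt (by norm_num) hR0).const_mul _
      apply Integrable.mono' hg
      · exact (hcont.mono (fun x hx => le_of_lt (lt_of_le_of_lt hbR hx))).aestronglyMeasurable
          measurableSet_Ioi
      · filter_upwards [ae_restrict_mem measurableSet_Ioi] with u hu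
        have huR : R < u := hu
        have hu2b : 2 * b ≤ u := le_trans (le_max_left _ _) huR.le
        have huz : 2 * ‖z‖ + 1 ≤ u := le_trans (le_max_right _ _) huR.le
        have hu0 : 0 < u := lt_trans hR0 huR
        have hbu : b ≤ u := le_trans hbR huR.le
        have hpq : 1 / ((u : ℂ) + (a : ℂ)) - 1 / ((u : ℂ) + z)
            = (z - (a : ℂ)) / (((u : ℂ) + (a : ℂ)) * ((u : ℂ) + z)) := by
          rw [div_sub_div _ _ (hpne u hbu) (hqne u hbu)]
          congr 1
          ring
        have hs1 : Real.sqrt (1 - 4 * m ^ 2 / u) ≤ 1 := by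
          apply Real.sqrt_le_one.mpr
          have : 0 ≤ 4 * m ^ 2 / u := by positivity
          linarith
        have hs0 : (0:ℝ) ≤ Real.sqrt (1 - 4 * m ^ 2 / u) := Real.sqrt_nonneg _
        have hnp : u / 2 ≤ ‖(u : ℂ) + (a : ℂ)‖ := by
          have : ((u : ℂ) + (a : ℂ)) = ((u + a : ℝ) : ℂ) := by push_cast; ring
          rw [this, Complex.norm_real, Real.norm_eq_abs]
          have : u + a ≤ |u + a| := le_abs_self _
          linarith
        have hnq : u / 2 ≤ ‖(u : ℂ) + z‖ := by
          have h4 := norm_add_le ((u : ℂ) + z) (-z)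
          simp only [add_neg_cancel_right, norm_neg] at h4
          rw [Complex.norm_real, Real.norm_eq_abs, abs_of_pos hu0] at h4
          have hz' : ‖z‖ = ‖z‖ := rfl
          rw [hz'] at h4
          linarith
        have hru : u ^ (-2 : ℝ) = (u ^ 2)⁻¹ := by
          rw [show (-2 : ℝ) = ((-2 : ℤ) : ℝ) by norm_num, Real.rpow_intCast, zpow_neg,
            show ((2:ℤ)) = ((2:ℕ):ℤ) from rfl, zpow_natCast]
        calc ‖f u‖ = Real.sqrt (1 - 4 * m ^ 2 / u) *
              (‖z - (a:ℂ)‖ / (‖(u : ℂ) + (a : ℂ)‖ * ‖(u : ℂ) + z‖)) := by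
              simp only [hfdef]
              rw [hpq, norm_mul, norm_div, norm_mul, Complex.norm_real, Real.norm_eq_abs,
                _root_.abs_of_nonneg hs0]
          _ ≤ 1 * (‖z - (a:ℂ)‖ / ((u/2) * (u/2))) := by
              apply mul_le_mul hs1 _ (by positivity) (by norm_num)
              apply div_le_div_of_nonneg_left (by positivity) (by positivity)
              apply mul_le_mul hnp hnq (by positivity) (norm_nonneg _)
          _ = 4 * ‖z - (a:ℂ)‖ * u ^ (-2 : ℝ) := by
              rw [hru]; field_simp; ring
    have hsub : Ioi b ⊆ Icc b R ∪ Ioi R := by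
      intro x hx
      by_cases h : x ≤ R
      · exact Or.inl ⟨le_of_lt hx, h⟩
      · exact Or.inr (lt_of_not_ge h)
    exact (h1.union h2).mono_set hsub
  -- imaginary part pointwise
  set h : ℝ → ℝ := fun u => Real.sqrt (1 - 4 * m ^ 2 / u) / Complex.normSq ((u : ℂ) + z)
    with hhdef
  have him_f : ∀ u ∈ Ioi b, (f u).im = z.im * h u := by
    intro u hu
    have hu' : b ≤ u := le_of_lt hu
    rw [hfdef, hhdef]
    simp only [Complex.mul_im, Complex.ofReal_re, Complex.ofReal_im, Complex.sub_im,
      one_div, Complex.inv_im, Complex.add_im, Complex.ofReal_im, Complex.add_re,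
      Complex.ofReal_re, zero_add]
    have : Complex.normSq ((u:ℂ) + (a:ℂ)) = (u+a)^2 := by
      simp [Complex.normSq_apply]; ring
    field_simp
    ring
  -- integrability of h
  have hinth : IntegrableOn h (Ioi b) := by
    have h1 : IntegrableOn (fun u => (f u).im) (Ioi b) := hint.im
    have h2 : IntegrableOn (fun u => z.im⁻¹ * (f u).im) (Ioi b) := h1.const_mul _
    apply h2.congr_fun _ measurableSet_Ioi
    intro u hu
    show z.im⁻¹ * (f u).im = h u
    rw [him_f u hu]
    field_simp
  -- F.im = z.im * ∫ h
  have hFim : (Fa m a z).im = z.im * ∫ u in Ioi b, h u := by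
    have h1 : (Fa m a z).im = ∫ u in Ioi b, (f u).im := by
      rw [Fa]
      exact (integral_im hint).symm
    rw [h1, ← integral_const_mul]
    apply setIntegral_congr_fun measurableSet_Ioi
    intro u hu
    exact him_f u hu
  -- positivity of ∫ h
  have hIpos : 0 < ∫ u in Ioi b, h u := by
    rw [setIntegral_pos_iff_support_of_nonneg_ae]
    · have hsub : Ioi b ⊆ Function.support h := by
        intro u hu
        have hu0 : 0 < u := lt_trans hb0 hu
        have hs : 0 < Real.sqrt (1 - 4 * m ^ 2 / u) := by
          apply Real.sqrt_pos.mpr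
          have : 4 * m ^ 2 / u < 1 := (div_lt_one hu0).mpr hu
          linarith
        have hns : 0 < Complex.normSq ((u : ℂ) + z) :=
          Complex.normSq_pos.mpr (hqne u (le_of_lt hu))
        exact ne_of_gt (div_pos hs hns)
      calc (0:ENNReal) < volume (Ioi b) := by simp [Real.volume_Ioi]
        _ ≤ volume (Function.support h ∩ Ioi b) := by
            apply measure_mono
            exact subset_inter hsub (subset_refl _)
    · apply Filter.Eventually.of_forall
      intro u
      exact div_nonneg (Real.sqrt_nonneg _) (Complex.normSq_nonneg _)
    · exact hinth
  rw [hFim, ← mul_assoc]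
  exact mul_pos (mul_self_pos.mpr him) hIpos


theorem stmt_7 (m a lam hb κ g₁ g₂ l₁ l₂ : ℝ) (hm : 0 < m) (ha : -4 * m ^ 2 < a)
    (hlam : 0 < lam) (hhb : 0 < hb) (hκ : κ = lam * hb / (16 * Real.pi ^ 2))
    (hl : l₁ ≠ 0 ∨ l₂ ≠ 0) (hineq : 0 ≤ g₂ * l₁ - l₂ * g₁) :
    ∀ z : ℂ, z ∉ cutSet m → Sfun m a κ g₁ g₂ l₁ l₂ z = 0 →
      z.im = 0 ∧ -4 * m ^ 2 < z.re := by
  intro z hz hS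
  have hκ0 : 0 < κ := by
    rw [hκ]
    have := Real.pi_pos
    positivity
  have hz' : z.im ≠ 0 ∨ -4 * m ^ 2 < z.re := by
    by_cases h : z.im = 0
    · right
      by_contra h2
      exact hz ⟨h, le_of_not_gt h2⟩
    · exact Or.inl h
  have hmain : z.im = 0 := by
    by_contra him
    set P : ℂ := (l₁ : ℂ) + (l₂ : ℂ) * z with hPdef
    set G : ℂ := (g₁ : ℂ) + (g₂ : ℂ) * z with hGdef
    have hPne : P ≠ 0 := by
      intro h
      rw [hPdef] at h
      have h1 : l₂ * z.im = 0 := by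
        have := congrArg Complex.im h; simpa using this
      have hl2 : l₂ = 0 := by
        rcases mul_eq_zero.mp h1 with h' | h'
        · exact h'
        · exact absurd h' him
      have h2 : l₁ = 0 := by
        have := congrArg Complex.re h
        simpa [hl2] using this
      rcases hl with h' | h' <;> [exact h' h2; exact h' hl2]
    have hP2 : 0 < Complex.normSq P := Complex.normSq_pos.mpr hPne
    -- from S(z) = 0 :
    have h1 : P * (κ:ℂ) * Fa m a z = -G := by
      rw [Sfun] at hS
      linear_combination -hS
    have hC : ((Complex.normSq P : ℝ) : ℂ) * (κ:ℂ) * Fa m a z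
        = -((starRingEnd ℂ) P * G) := by
      calc ((Complex.normSq P : ℝ) : ℂ) * (κ:ℂ) * Fa m a z
          = (starRingEnd ℂ) P * (P * (κ:ℂ) * Fa m a z) := by
            rw [← Complex.mul_conj]; ring
        _ = (starRingEnd ℂ) P * (-G) := by rw [h1]
        _ = -((starRingEnd ℂ) P * G) := by ring
    have hCim := congrArg Complex.im hC
    have hL : (((Complex.normSq P : ℝ) : ℂ) * (κ:ℂ) * Fa m a z).im
        = Complex.normSq P * κ * (Fa m a z).im := by
      simp [Complex.mul_im]
      try ring
    have hR : (-((starRingEnd ℂ) P * G)).im = -((l₁ * g₂ - l₂ * g₁) * z.im) := by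
      rw [hPdef, hGdef]
      simp only [Complex.neg_im, Complex.mul_im, Complex.mul_re, Complex.add_re,
        Complex.add_im, Complex.ofReal_re, Complex.ofReal_im, Complex.conj_re,
        Complex.conj_im, map_add, map_mul, Complex.conj_ofReal]
      ring
    rw [hL, hR] at hCim
    have hkey := Fa_im_key m a z hm ha hz' him
    have h4 : Complex.normSq P * κ * (z.im * (Fa m a z).im)
        = -((l₁ * g₂ - l₂ * g₁) * z.im ^ 2) := by
      linear_combination z.im * hCim
    nlinarith [mul_pos (mul_pos hP2 hκ0) hkey, mul_nonneg hineq (sq_nonneg z.im)]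
  refine ⟨hmain, ?_⟩
  rcases hz' with h | h
  · exact absurd hmain h
  · exact h
end

section
/- Assume that at least one of λ₁, λ₂ is nonzero and that g₂λ₁ − λ₂g₁ ≥ 0. Then the set 𝒮 = { z ∈ ℂ \ (-∞, -4m²] : S(z) = 0 } has at most two elements. -/
open MeasureTheory Complex Filter

private lemma aux_cpos {m : ℝ} (hm : 0 < m) {z : ℂ} (hz : z ∉ cutSet m) :
    ∃ c > 0, ∀ u ∈ Set.Ioi (4 * m ^ 2 : ℝ), c * u ≤ ‖(u : ℂ) + z‖ := by
  have hre : ∀ u : ℝ, u + z.re ≤ ‖(u : ℂ) + z‖ := by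
    intro u
    calc u + z.re ≤ |u + z.re| := le_abs_self _
    _ = |((u : ℂ) + z).re| := by simp
    _ ≤ ‖(u : ℂ) + z‖ := Complex.abs_re_le_norm _
  have him : ∀ u : ℝ, |z.im| ≤ ‖(u : ℂ) + z‖ := by
    intro u
    calc |z.im| = |((u : ℂ) + z).im| := by simp
    _ ≤ ‖(u : ℂ) + z‖ := Complex.abs_im_le_norm _
  by_cases hy : z.im = 0
  · have hx : -4 * m ^ 2 < z.re := by
      by_contra h
      exact hz ⟨hy, le_of_not_gt h⟩
    have hd : 0 < 4 * m ^ 2 + z.re := by linarith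
    refine ⟨(4 * m ^ 2 + z.re) / (4 * m ^ 2 + z.re + |z.re|), by positivity, fun u hu => ?_⟩
    have hu' : 4 * m ^ 2 < u := hu
    have h1 := hre u
    rw [div_mul_eq_mul_div, div_le_iff₀ (by positivity)]
    rcases abs_cases z.re with ⟨h2, h3⟩ | ⟨h2, h3⟩ <;> nlinarith [norm_nonneg ((u:ℂ) + z), hm.le]
  · have hy' : 0 < |z.im| := abs_pos.2 hy
    refine ⟨|z.im| / (|z.im| + |z.re|), by positivity, fun u hu => ?_⟩
    have hu0 : 0 < u := lt_trans (by positivity) hu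
    have h1 := hre u
    have h2 := him u
    rw [div_mul_eq_mul_div, div_le_iff₀ (by positivity)]
    rcases abs_cases z.re with ⟨h4, h5⟩ | ⟨h4, h5⟩ <;> nlinarith [norm_nonneg ((u:ℂ) + z)]

private lemma ne_zero_of_mem {m : ℝ} (hm : 0 < m) {z : ℂ} (hz : z ∉ cutSet m)
    {u : ℝ} (hu : u ∈ Set.Ioi (4 * m ^ 2 : ℝ)) : (u : ℂ) + z ≠ 0 := by
  obtain ⟨c, hc, h⟩ := aux_cpos hm hz
  have hu0 : 0 < u := lt_trans (by positivity) hu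
  have := h u hu
  intro h0
  rw [h0] at this
  simp at this
  nlinarith

private lemma integrable_f {m a : ℝ} (hm : 0 < m) (ha : -4 * m ^ 2 < a) {z : ℂ}
    (hz : z ∉ cutSet m) :
    IntegrableOn (fun u : ℝ => (Real.sqrt (1 - 4 * m ^ 2 / u) : ℂ) *
      (1 / ((u : ℂ) + (a : ℂ)) - 1 / ((u : ℂ) + z))) (Set.Ioi (4 * m ^ 2)) := by
  have hzne : ∀ u ∈ Set.Ioi (4 * m ^ 2 : ℝ), (u : ℂ) + z ≠ 0 := fun u hu =>
    ne_zero_of_mem hm hz hu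
  obtain ⟨c, hc, hcu⟩ := aux_cpos hm hz
  have hb : (0 : ℝ) < 4 * m ^ 2 := by positivity
  set c₀ : ℝ := min 1 (1 + a / (4 * m ^ 2)) with hc₀
  have hc₀pos : 0 < c₀ := by
    apply lt_min one_pos
    have : -1 < a / (4 * m ^ 2) := by
      rw [lt_div_iff₀ hb] at *
      linarith
    linarith
  have hua : ∀ u ∈ Set.Ioi (4 * m ^ 2 : ℝ), c₀ * u ≤ u + a := by
    intro u hu
    have hu' : 4 * m ^ 2 < u := hu
    rcases le_or_gt 0 a with h | h
    · have : c₀ ≤ 1 := min_le_left _ _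
      nlinarith
    · have h1 : c₀ ≤ 1 + a / (4 * m ^ 2) := min_le_right _ _
      have h2 : (1 + a / (4 * m ^ 2)) * u ≤ u + a := by
        rw [add_mul, one_mul, div_mul_eq_mul_div]
        have : a * u / (4 * m ^ 2) ≤ a := (div_le_iff₀ hb).2 (by nlinarith)
        linarith
      nlinarith
  have hcont : ContinuousOn (fun u : ℝ => (Real.sqrt (1 - 4 * m ^ 2 / u) : ℂ) *
      (1 / ((u : ℂ) + (a : ℂ)) - 1 / ((u : ℂ) + z))) (Set.Ioi (4 * m ^ 2)) := by
    apply ContinuousOn.mul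
    · exact Complex.continuous_ofReal.comp_continuousOn
        ((Real.continuous_sqrt.comp_continuousOn
          (continuousOn_const.sub (continuousOn_const.div continuousOn_id
            (fun u hu => ne_of_gt (lt_trans hb hu))))))
    · apply ContinuousOn.sub
      · apply ContinuousOn.div continuousOn_const
          ((Complex.continuous_ofReal.continuousOn).add continuousOn_const)
        intro u hu
        have hu' : (4 : ℝ) * m ^ 2 < u := hu
        have : (0 : ℝ) < u + a := by linarith
        intro hcontra
        change (u:ℂ) + (a:ℂ) = 0 at hcontra
        rw [show ((u:ℂ) + (a:ℂ)) = ((u + a : ℝ) : ℂ) by push_cast; ring] at hcontra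
        exact (ne_of_gt ‹(0:ℝ) < u + a›) (by exact_mod_cast hcontra : u + a = 0)
      · exact ContinuousOn.div continuousOn_const
          ((Complex.continuous_ofReal.continuousOn).add continuousOn_const) hzne
  refine Integrable.mono'
    ((integrableOn_Ioi_rpow_of_lt (by norm_num : (-2 : ℝ) < -1) hb).const_mul
      (‖z - (a:ℂ)‖ * (c₀⁻¹ * c⁻¹)))
    (hcont.aestronglyMeasurable measurableSet_Ioi) ?_
  filter_upwards [ae_restrict_mem measurableSet_Ioi] with u hu
  have hu' : 4 * m ^ 2 < u := hu
  have hu0 : 0 < u := lt_trans hb hu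
  have hA : ((u : ℂ) + (a : ℂ)) ≠ 0 := by
    intro hcontra
    rw [show ((u:ℂ) + (a:ℂ)) = ((u + a : ℝ) : ℂ) by push_cast; ring] at hcontra
    have : u + a = 0 := by exact_mod_cast hcontra
    linarith
  have hB := hzne u hu
  have hdiff : 1 / ((u : ℂ) + (a : ℂ)) - 1 / ((u : ℂ) + z)
      = (z - a) / (((u : ℂ) + (a : ℂ)) * ((u : ℂ) + z)) := by
    field_simp
    ring
  have hsq : 0 ≤ 1 - 4 * m ^ 2 / u := by
    have : 4 * m ^ 2 / u < 1 := (div_lt_one hu0).2 hu'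
    linarith
  have hw1 : Real.sqrt (1 - 4 * m ^ 2 / u) ≤ 1 := by
    have h0 : (0:ℝ) ≤ 4 * m ^ 2 / u := by positivity
    have := Real.sqrt_le_sqrt (show 1 - 4 * m ^ 2 / u ≤ 1 by linarith)
    simpa using this
  have hnorm : ‖(Real.sqrt (1 - 4 * m ^ 2 / u) : ℂ) *
      (1 / ((u : ℂ) + (a : ℂ)) - 1 / ((u : ℂ) + z))‖
      = Real.sqrt (1 - 4 * m ^ 2 / u) * (‖z - (a:ℂ)‖ / (‖(u : ℂ) + (a : ℂ)‖ * ‖(u : ℂ) + z‖)) := by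
    rw [hdiff, norm_mul, Complex.norm_real, Real.norm_eq_abs,
      _root_.abs_of_nonneg (Real.sqrt_nonneg _), norm_div, norm_mul]
  rw [hnorm]
  have hnA : (0 : ℝ) < c₀ * u := by positivity
  have hnB : (0 : ℝ) < c * u := by positivity
  have hA' : c₀ * u ≤ ‖(u : ℂ) + (a : ℂ)‖ := by
    calc c₀ * u ≤ u + a := hua u hu
    _ = ‖((u + a : ℝ) : ℂ)‖ := by
        rw [Complex.norm_real, Real.norm_eq_abs, _root_.abs_of_pos (by linarith)]
    _ = ‖(u : ℂ) + (a : ℂ)‖ := by push_cast; ring_nf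
  have hB' := hcu u hu
  have hrpow : u ^ (-2 : ℝ) = (u * u)⁻¹ := by
    rw [show (-2:ℝ) = ((-2 : ℤ) : ℝ) by norm_num, Real.rpow_intCast, zpow_neg,
      show ((2:ℤ)) = ((2:ℕ) : ℤ) by norm_num, zpow_natCast, sq, mul_inv]
  calc Real.sqrt (1 - 4 * m ^ 2 / u) * (‖z - (a:ℂ)‖ / (‖(u : ℂ) + (a : ℂ)‖ * ‖(u : ℂ) + z‖))
      ≤ 1 * (‖z - (a:ℂ)‖ / ((c₀ * u) * (c * u))) := by
        apply mul_le_mul hw1 _ (by positivity) one_pos.le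
        apply div_le_div_of_nonneg_left (norm_nonneg _) (by positivity)
        exact mul_le_mul hA' hB' hnB.le (norm_nonneg _)
    _ = ‖z - (a:ℂ)‖ * (c₀⁻¹ * c⁻¹) * u ^ (-2 : ℝ) := by
        rw [hrpow, div_eq_mul_inv, mul_inv, mul_inv]; ring

private lemma pos_helper {b : ℝ} {h : ℝ → ℝ} (hint : IntegrableOn h (Set.Ioi b))
    (hpos : ∀ u ∈ Set.Ioi b, 0 < h u) : 0 < ∫ u in Set.Ioi b, h u := by
  rw [setIntegral_pos_iff_support_of_nonneg_ae ?_ hint]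
  · refine lt_of_lt_of_le ?_ (measure_mono (fun u hu => ⟨(hpos u hu).ne', hu⟩))
    simp [Real.volume_Ioi]
  · filter_upwards [ae_restrict_mem measurableSet_Ioi] with u hu
    exact (hpos u hu).le

private lemma im_Fa_pos {m a : ℝ} (hm : 0 < m) (ha : -4 * m ^ 2 < a) {z : ℂ}
    (hz : z ∉ cutSet m) (hy : z.im ≠ 0) : 0 < z.im * (Fa m a z).im := by
  have hzne : ∀ u ∈ Set.Ioi (4 * m ^ 2 : ℝ), (u : ℂ) + z ≠ 0 := fun u hu =>
    ne_zero_of_mem hm hz hu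
  have hint := integrable_f hm ha hz
  have h1 : (Fa m a z).im = ∫ u in Set.Ioi (4 * m ^ 2),
      ((Real.sqrt (1 - 4 * m ^ 2 / u) : ℂ) * (1 / ((u : ℂ) + (a : ℂ)) - 1 / ((u : ℂ) + z))).im := by
    rw [Fa]; exact (integral_im hint).symm
  rw [h1, ← integral_const_mul]
  apply pos_helper ((hint.im).const_mul z.im)
  intro u hu
  have hu' : 4 * m ^ 2 < u := hu
  have hu0 : 0 < u := lt_trans (by positivity) hu
  have hB := hzne u hu
  have hw : 0 < Real.sqrt (1 - 4 * m ^ 2 / u) := by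
    have : 4 * m ^ 2 / u < 1 := (div_lt_one hu0).2 hu'
    exact Real.sqrt_pos.2 (by linarith)
  have him : ((Real.sqrt (1 - 4 * m ^ 2 / u) : ℂ) *
      (1 / ((u : ℂ) + (a : ℂ)) - 1 / ((u : ℂ) + z))).im
      = Real.sqrt (1 - 4 * m ^ 2 / u) * (z.im / Complex.normSq ((u : ℂ) + z)) := by
    simp [Complex.mul_im, one_div, Complex.inv_im, Complex.inv_re]
    field_simp
  simp only [RCLike.im_to_complex]
  rw [him]
  have hnsq : 0 < Complex.normSq ((u : ℂ) + z) := Complex.normSq_pos.2 hB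
  have hzz : 0 < z.im * z.im := mul_self_pos.2 hy
  calc (0:ℝ) < Real.sqrt (1 - 4 * m ^ 2 / u) *
      ((z.im * z.im) / Complex.normSq ((u : ℂ) + z)) := by positivity
  _ = z.im * (Real.sqrt (1 - 4 * m ^ 2 / u) * (z.im / Complex.normSq ((u : ℂ) + z))) := by ring

private lemma cast_notin_cut {m : ℝ} {x : ℝ} (hx : -4 * m ^ 2 < x) : (x : ℂ) ∉ cutSet m := by
  intro h
  have := h.2
  simp at this
  linarith

private lemma Fa_diff {m a : ℝ} (hm : 0 < m) (ha : -4 * m ^ 2 < a) {x x' : ℝ}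
    (hx : -4 * m ^ 2 < x) (hx' : -4 * m ^ 2 < x') (hne : x ≠ x') :
    ∃ I : ℝ, 0 < I ∧ Fa m a (x' : ℂ) - Fa m a (x : ℂ) = (((x' - x) * I : ℝ) : ℂ) := by
  have hintx := integrable_f hm ha (cast_notin_cut hx)
  have hintx' := integrable_f hm ha (cast_notin_cut hx')
  have hb : (0 : ℝ) < 4 * m ^ 2 := by positivity
  set g : ℝ → ℝ := fun u => Real.sqrt (1 - 4 * m ^ 2 / u) * ((u + x)⁻¹ * (u + x')⁻¹) with hg
  have hpt : ∀ u ∈ Set.Ioi (4 * m ^ 2 : ℝ),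
      ((Real.sqrt (1 - 4 * m ^ 2 / u) : ℂ) * (1 / ((u : ℂ) + (a : ℂ)) - 1 / ((u : ℂ) + (x' : ℂ))))
      - ((Real.sqrt (1 - 4 * m ^ 2 / u) : ℂ) * (1 / ((u : ℂ) + (a : ℂ)) - 1 / ((u : ℂ) + (x : ℂ))))
      = (((x' - x) * g u : ℝ) : ℂ) := by
    intro u hu
    have hu' : 4 * m ^ 2 < u := hu
    have h1 : (0:ℝ) < u + x := by linarith
    have h2 : (0:ℝ) < u + x' := by linarith
    have h1c : ((u : ℂ) + (x : ℂ)) ≠ 0 := by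
      rw [show ((u:ℂ) + (x:ℂ)) = ((u + x : ℝ) : ℂ) by push_cast; ring]
      exact_mod_cast h1.ne'
    have h2c : ((u : ℂ) + (x' : ℂ)) ≠ 0 := by
      rw [show ((u:ℂ) + (x':ℂ)) = ((u + x' : ℝ) : ℂ) by push_cast; ring]
      exact_mod_cast h2.ne'
    rw [hg]
    push_cast
    field_simp
    ring
  have hsub : Fa m a (x' : ℂ) - Fa m a (x : ℂ)
      = ∫ u in Set.Ioi (4 * m ^ 2), (((x' - x) * g u : ℝ) : ℂ) := by
    rw [Fa, Fa, ← integral_sub hintx' hintx]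
    exact setIntegral_congr_fun measurableSet_Ioi hpt
  rw [show (∫ u in Set.Ioi (4 * m ^ 2), (((x' - x) * g u : ℝ) : ℂ))
      = (((∫ u in Set.Ioi (4 * m ^ 2), (x' - x) * g u : ℝ)) : ℂ) from integral_ofReal] at hsub
  have hgint : IntegrableOn g (Set.Ioi (4 * m ^ 2)) := by
    have hd : x' - x ≠ 0 := sub_ne_zero.2 (Ne.symm hne)
    have h1 : IntegrableOn (fun u => (((x' - x) * g u : ℝ) : ℂ)) (Set.Ioi (4 * m ^ 2)) :=
      MeasureTheory.IntegrableOn.congr_fun (hintx'.sub hintx)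
        (fun u hu => hpt u hu) measurableSet_Ioi
    have h2 := h1.re
    have h3 : IntegrableOn (fun u => (x' - x) * g u) (Set.Ioi (4 * m ^ 2)) :=
      MeasureTheory.IntegrableOn.congr_fun h2 (fun u _ => by simp) measurableSet_Ioi
    have h4 := h3.const_mul (x' - x)⁻¹
    exact MeasureTheory.IntegrableOn.congr_fun h4
      (fun u _ => by field_simp) measurableSet_Ioi
  have hI : 0 < ∫ u in Set.Ioi (4 * m ^ 2), g u := by
    apply pos_helper hgint
    intro u hu
    have hu' : 4 * m ^ 2 < u := hu
    have hu0 : 0 < u := lt_trans hb hu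
    have hw : 0 < Real.sqrt (1 - 4 * m ^ 2 / u) := by
      have : 4 * m ^ 2 / u < 1 := (div_lt_one hu0).2 hu'
      exact Real.sqrt_pos.2 (by linarith)
    have h1 : (0:ℝ) < u + x := by linarith
    have h2 : (0:ℝ) < u + x' := by linarith
    rw [hg]
    positivity
  refine ⟨_, hI, ?_⟩
  rw [hsub]
  norm_cast
  rw [integral_const_mul]

private lemma reality_core {κ g₁ g₂ l₁ l₂ : ℝ} (hκpos : 0 < κ) (hineq : 0 ≤ g₂ * l₁ - l₂ * g₁)
    {z F : ℂ} (him : 0 < z.im * F.im) (hΛ : (l₁ : ℂ) + (l₂ : ℂ) * z ≠ 0)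
    (hS : -((l₁ : ℂ) + (l₂ : ℂ) * z) * (κ : ℂ) * F - ((g₁ : ℂ) + (g₂ : ℂ) * z) = 0) :
    False := by
  have h0 : ((l₁ : ℂ) + l₂ * z) * κ * F + ((g₁ : ℂ) + g₂ * z) = 0 := by
    linear_combination -hS
  have h1 := congrArg Complex.re h0
  have h2 := congrArg Complex.im h0
  simp only [Complex.add_re, Complex.add_im, Complex.mul_re, Complex.mul_im,
    Complex.ofReal_re, Complex.ofReal_im, Complex.zero_re, Complex.zero_im,
    mul_zero, zero_mul, sub_zero, add_zero, zero_add, zero_sub, neg_zero] at h1 h2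
  have hN : 0 < (l₁ + l₂ * z.re) ^ 2 + (l₂ * z.im) ^ 2 := by
    rcases (by
      by_contra hcon
      push_neg at hcon
      apply hΛ
      apply Complex.ext <;> simp [hcon.1, hcon.2]
      : (l₁ + l₂ * z.re) ≠ 0 ∨ (l₂ * z.im) ≠ 0) with h | h
    · positivity
    · positivity
  have hcomb : κ * ((l₁ + l₂ * z.re) ^ 2 + (l₂ * z.im) ^ 2) * F.im
      = -(z.im * (g₂ * l₁ - l₂ * g₁)) := by
    linear_combination (l₁ + l₂ * z.re) * h2 - (l₂ * z.im) * h1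
  have key : κ * ((l₁ + l₂ * z.re) ^ 2 + (l₂ * z.im) ^ 2) * (z.im * F.im)
      = -(z.im ^ 2 * (g₂ * l₁ - l₂ * g₁)) := by
    linear_combination z.im * hcomb
  nlinarith [mul_pos (mul_pos hκpos hN) him, mul_nonneg hineq (sq_nonneg z.im)]

private lemma inj_core {κ g₁ g₂ l₁ l₂ : ℝ} (hκpos : 0 < κ)
    {x x' I : ℝ} {Fx Fx' : ℂ}
    (hdiff : Fx' - Fx = (((x' - x) * I : ℝ) : ℂ)) (hI : 0 < I)
    (hS : -((l₁ : ℂ) + (l₂ : ℂ) * (x:ℂ)) * (κ : ℂ) * Fx - ((g₁ : ℂ) + (g₂ : ℂ) * (x:ℂ)) = 0)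
    (hS' : -((l₁ : ℂ) + (l₂ : ℂ) * (x':ℂ)) * (κ : ℂ) * Fx' - ((g₁ : ℂ) + (g₂ : ℂ) * (x':ℂ)) = 0)
    (hP : 0 < (l₁ + l₂ * x) * (l₁ + l₂ * x') ∨
      ((l₁ + l₂ * x) * (l₁ + l₂ * x') ≠ 0 ∧ g₂ * l₁ - l₂ * g₁ = 0))
    (hD : 0 ≤ g₂ * l₁ - l₂ * g₁) : x = x' := by
  by_contra hne
  have key : (κ : ℂ) * ((l₁ : ℂ) + l₂ * (x:ℂ)) * ((l₁ : ℂ) + l₂ * (x':ℂ)) * (Fx' - Fx)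
      = -(((x':ℂ) - (x:ℂ)) * ((g₂:ℂ) * l₁ - (l₂:ℂ) * g₁)) := by
    linear_combination ((l₁ : ℂ) + l₂ * (x':ℂ)) * hS - ((l₁ : ℂ) + l₂ * (x:ℂ)) * hS'
  rw [hdiff] at key
  have keyR : κ * (l₁ + l₂ * x) * (l₁ + l₂ * x') * ((x' - x) * I)
      = -((x' - x) * (g₂ * l₁ - l₂ * g₁)) := by
    exact_mod_cast key
  have hx0 : x' - x ≠ 0 := sub_ne_zero.2 (Ne.symm hne)
  rcases hP with hP | ⟨hP, hD0⟩
  · rcases lt_or_gt_of_ne hne with h | h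
    · nlinarith [mul_pos (mul_pos hκpos hP) (mul_pos (sub_pos.2 h) hI),
        mul_nonneg hD (sub_pos.2 h).le]
    · nlinarith [mul_pos (mul_pos hκpos hP) (mul_pos (sub_pos.2 h) hI),
        mul_nonneg hD (sub_pos.2 h).le]
  · have h0 : (x' - x) * (κ * ((l₁ + l₂ * x) * (l₁ + l₂ * x')) * I) = 0 := by
      linear_combination keyR - (x' - x) * hD0
    rcases mul_eq_zero.1 h0 with h | h
    · exact hx0 h
    · rcases mul_eq_zero.1 h with h' | h'
      · rcases mul_eq_zero.1 h' with h'' | h''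
        · exact hκpos.ne' h''
        · exact hP h''
      · exact hI.ne' h'

private lemma type2_unique {m a κ g₁ g₂ l₁ l₂ : ℝ} (hm : 0 < m) (ha : -4 * m ^ 2 < a)
    (hκpos : 0 < κ) (hD : 0 ≤ g₂ * l₁ - l₂ * g₁) {x x' : ℝ}
    (hx : -4 * m ^ 2 < x) (hx' : -4 * m ^ 2 < x')
    (hS : Sfun m a κ g₁ g₂ l₁ l₂ (x : ℂ) = 0) (hS' : Sfun m a κ g₁ g₂ l₁ l₂ (x' : ℂ) = 0)
    (hP : 0 < (l₁ + l₂ * x) * (l₁ + l₂ * x') ∨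
      ((l₁ + l₂ * x) * (l₁ + l₂ * x') ≠ 0 ∧ g₂ * l₁ - l₂ * g₁ = 0)) : x = x' := by
  by_cases hne : x = x'
  · exact hne
  · obtain ⟨I, hI, hdiff⟩ := Fa_diff hm ha hx hx' hne
    rw [Sfun] at hS hS'
    exact inj_core hκpos hdiff hI hS hS' hP hD

private lemma pair_helper {B C : Set ℂ} (hB : B.Subsingleton) (hC : C.Subsingleton) :
    ∃ z₁ z₂ : ℂ, B ∪ C ⊆ {z₁, z₂} := by
  rcases hB.eq_empty_or_singleton with h | ⟨b, h⟩ <;>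
    rcases hC.eq_empty_or_singleton with h' | ⟨c, h'⟩
  · exact ⟨0, 0, by simp [h, h']⟩
  · exact ⟨c, c, by simp [h, h']⟩
  · exact ⟨b, b, by simp [h, h']⟩
  · exact ⟨b, c, by rw [h, h']; exact Set.union_subset (by simp) (by simp)⟩

theorem stmt_9 (m a lam hb κ g₁ g₂ l₁ l₂ : ℝ) (hm : 0 < m) (ha : -4 * m ^ 2 < a)
    (hlam : 0 < lam) (hhb : 0 < hb) (hκ : κ = lam * hb / (16 * Real.pi ^ 2))
    (hl : l₁ ≠ 0 ∨ l₂ ≠ 0) (hineq : 0 ≤ g₂ * l₁ - l₂ * g₁) :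
    ∃ z₁ z₂ : ℂ, {z : ℂ | z ∉ cutSet m ∧ Sfun m a κ g₁ g₂ l₁ l₂ z = 0} ⊆ {z₁, z₂} := by
  have hπ := Real.pi_pos
  have hκpos : 0 < κ := by rw [hκ]; positivity
  set Z := {z : ℂ | z ∉ cutSet m ∧ Sfun m a κ g₁ g₂ l₁ l₂ z = 0} with hZdef
  -- every zero is of type 1 (Λ z = 0 and G z = 0) or type 2 (real with Λ ≠ 0)
  have htype : ∀ z ∈ Z, ((l₁:ℂ) + l₂ * z = 0 ∧ (g₁:ℂ) + g₂ * z = 0) ∨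
      (z = (z.re : ℂ) ∧ -4 * m ^ 2 < z.re ∧ l₁ + l₂ * z.re ≠ 0) := by
    rintro z ⟨hz1, hz2⟩
    by_cases hΛ : (l₁:ℂ) + l₂ * z = 0
    · left
      refine ⟨hΛ, ?_⟩
      rw [Sfun, hΛ] at hz2
      simp at hz2
      linear_combination -hz2
    · right
      have hy : z.im = 0 := by
        by_contra hy
        have him := im_Fa_pos hm ha hz1 hy
        rw [Sfun] at hz2
        exact reality_core hκpos hineq him hΛ hz2
      have hzre : z = (z.re : ℂ) := by
        apply Complex.ext <;> simp [hy]
      have hre : -4 * m ^ 2 < z.re := by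
        by_contra h
        exact hz1 ⟨hy, le_of_not_gt h⟩
      refine ⟨hzre, hre, ?_⟩
      intro hc
      apply hΛ
      rw [hzre]
      exact_mod_cast congrArg (Complex.ofReal) hc
  -- type 1 zeros determine degenerate case
  have hdeg : ∀ z : ℂ, ((l₁:ℂ) + l₂ * z = 0 ∧ (g₁:ℂ) + g₂ * z = 0) →
      g₂ * l₁ - l₂ * g₁ = 0 := by
    rintro z ⟨hΛ, hG⟩
    have hc : ((g₂ * l₁ - l₂ * g₁ : ℝ) : ℂ) = 0 := by
      push_cast
      linear_combination (g₂:ℂ) * hΛ - (l₂:ℂ) * hG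
    exact_mod_cast hc
  -- type 1 zeros are unique
  have htype1_sub : ∀ z w : ℂ, (l₁:ℂ) + l₂ * z = 0 → (l₁:ℂ) + l₂ * w = 0 → z = w := by
    intro z w hz hw
    have hl₂ : l₂ ≠ 0 := by
      intro h
      rw [h] at hz
      push_cast at hz
      simp at hz
      rcases hl with h' | h'
      · exact h' hz
      · exact h' h
    have hl₂c : (l₂:ℂ) ≠ 0 := by exact_mod_cast hl₂
    have : (l₂:ℂ) * (z - w) = 0 := by linear_combination hz - hw
    rcases mul_eq_zero.1 this with h | h
    · exact absurd h hl₂c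
    · exact sub_eq_zero.1 h
  -- type 2 uniqueness wrapper on complex numbers
  have htype2_eq : ∀ z ∈ Z, ∀ w ∈ Z,
      (z = (z.re : ℂ) ∧ -4 * m ^ 2 < z.re) → (w = (w.re : ℂ) ∧ -4 * m ^ 2 < w.re) →
      (0 < (l₁ + l₂ * z.re) * (l₁ + l₂ * w.re) ∨
        ((l₁ + l₂ * z.re) * (l₁ + l₂ * w.re) ≠ 0 ∧ g₂ * l₁ - l₂ * g₁ = 0)) → z = w := by
    rintro z ⟨hz1, hz2⟩ w ⟨hw1, hw2⟩ ⟨hzc, hzr⟩ ⟨hwc, hwr⟩ hP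
    have hSz : Sfun m a κ g₁ g₂ l₁ l₂ ((z.re : ℝ) : ℂ) = 0 := by rw [← hzc]; exact hz2
    have hSw : Sfun m a κ g₁ g₂ l₁ l₂ ((w.re : ℝ) : ℂ) = 0 := by rw [← hwc]; exact hw2
    have := type2_unique hm ha hκpos hineq hzr hwr hSz hSw hP
    rw [hzc, hwc, this]
  by_cases hD : g₂ * l₁ - l₂ * g₁ = 0
  · -- degenerate case: split by Λ z = 0 or not
    obtain ⟨z₁, z₂, hp⟩ := pair_helper
      (show (Z ∩ {z : ℂ | (l₁:ℂ) + l₂ * z = 0}).Subsingleton by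
        rintro z ⟨hz, hΛz⟩ w ⟨hw, hΛw⟩
        exact htype1_sub z w hΛz hΛw)
      (show (Z ∩ {z : ℂ | (l₁:ℂ) + l₂ * z ≠ 0}).Subsingleton by
        rintro z ⟨hz, hΛz⟩ w ⟨hw, hΛw⟩
        rcases htype z hz with ⟨h1, _⟩ | ⟨hzc, hzr, hzl⟩
        · exact absurd h1 hΛz
        rcases htype w hw with ⟨h1, _⟩ | ⟨hwc, hwr, hwl⟩
        · exact absurd h1 hΛw
        exact htype2_eq z hz w hw ⟨hzc, hzr⟩ ⟨hwc, hwr⟩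
          (Or.inr ⟨mul_ne_zero hzl hwl, hD⟩))
    refine ⟨z₁, z₂, fun z hz => hp ?_⟩
    by_cases h : (l₁:ℂ) + l₂ * z = 0
    · exact Or.inl ⟨hz, h⟩
    · exact Or.inr ⟨hz, h⟩
  · -- nondegenerate case: no type-1 zeros; split by sign of l₁ + l₂ z.re
    have htype2 : ∀ z ∈ Z, z = (z.re : ℂ) ∧ -4 * m ^ 2 < z.re ∧ l₁ + l₂ * z.re ≠ 0 := by
      intro z hz
      rcases htype z hz with h | h
      · exact absurd (hdeg z h) hD
      · exact h
    obtain ⟨z₁, z₂, hp⟩ := pair_helper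
      (show (Z ∩ {z : ℂ | 0 < l₁ + l₂ * z.re}).Subsingleton by
        rintro z ⟨hz, hΛz⟩ w ⟨hw, hΛw⟩
        obtain ⟨hzc, hzr, _⟩ := htype2 z hz
        obtain ⟨hwc, hwr, _⟩ := htype2 w hw
        exact htype2_eq z hz w hw ⟨hzc, hzr⟩ ⟨hwc, hwr⟩ (Or.inl (mul_pos hΛz hΛw)))
      (show (Z ∩ {z : ℂ | l₁ + l₂ * z.re < 0}).Subsingleton by
        rintro z ⟨hz, hΛz⟩ w ⟨hw, hΛw⟩
        obtain ⟨hzc, hzr, _⟩ := htype2 z hz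
        obtain ⟨hwc, hwr, _⟩ := htype2 w hw
        exact htype2_eq z hz w hw ⟨hzc, hzr⟩ ⟨hwc, hwr⟩
          (Or.inl (mul_pos_of_neg_of_neg hΛz hΛw)))
    refine ⟨z₁, z₂, fun z hz => hp ?_⟩
    obtain ⟨_, _, hzl⟩ := htype2 z hz
    rcases hzl.lt_or_gt with h | h
    · exact Or.inr ⟨hz, h⟩
    · exact Or.inl ⟨hz, h⟩
end

section
/- For every complex z in the domain ℂ \ (-∞, -4m²] with S(z) = 0 one has the identity |λ₁ + λ₂ z|² · κ · Im(F_a(z)) = −(g₂λ₁ − λ₂g₁) · Im(z). -/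
open MeasureTheory Complex Filter

theorem stmt_10 (m a lam hb κ g₁ g₂ l₁ l₂ : ℝ) (hm : 0 < m) (ha : -4 * m ^ 2 < a)
    (hlam : 0 < lam) (hhb : 0 < hb) (hκ : κ = lam * hb / (16 * Real.pi ^ 2)) :
    ∀ z : ℂ, z ∉ cutSet m → Sfun m a κ g₁ g₂ l₁ l₂ z = 0 →
      ‖(l₁ : ℂ) + (l₂ : ℂ) * z‖ ^ 2 * κ * (Fa m a z).im =
        -(g₂ * l₁ - l₂ * g₁) * z.im := by
  intro z _ hS
  set w : ℂ := (l₁ : ℂ) + (l₂ : ℂ) * z with hw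
  set F : ℂ := Fa m a z with hF
  have h : w * (κ : ℂ) * F = -((g₁ : ℂ) + (g₂ : ℂ) * z) := by
    have := hS
    unfold Sfun at this
    rw [← hF, ← hw] at this
    linear_combination -this
  have key : ((starRingEnd ℂ) w * (w * (κ : ℂ) * F)).im
      = ‖w‖ ^ 2 * κ * F.im := by
    rw [show (starRingEnd ℂ) w * (w * (κ : ℂ) * F)
        = ((starRingEnd ℂ) w * w) * ((κ : ℂ) * F) by ring,
      show (starRingEnd ℂ) w * w = (Complex.normSq w : ℂ) from
        (Complex.normSq_eq_conj_mul_self).symm]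
    simp [Complex.mul_im, Complex.sq_norm]
    ring
  rw [← key, h]
  simp [hw, Complex.mul_im, Complex.mul_re]
  ring
end

section
/- Let f : ℝ → ℂ be a Schwartz function and for t > 0 define W(t) = ∫_0^∞ f(p) · e^{ipt} · p dp. Then t² · W(t) → −f(0) as t → +∞; in particular W(t) decays as 1/t² for large times. -/
open MeasureTheory Complex Filter Topology

lemma norm_exp_ipt (p t : ℝ) : ‖Complex.exp (Complex.I * p * t)‖ = 1 := by
  have : Complex.I * p * t = ((p * t : ℝ) : ℂ) * Complex.I := by push_cast; ring
  rw [this]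
  simpa using Complex.norm_exp_ofReal_mul_I (p * t)

lemma intA (φ : SchwartzMap ℝ ℂ) (t : ℝ) :
    IntegrableOn (fun p : ℝ => φ p * Complex.exp (Complex.I * p * t)) (Set.Ioi 0) volume := by
  have hb : Integrable (fun p : ℝ => Complex.exp (Complex.I * p * t) * φ p)
      (volume.restrict (Set.Ioi (0:ℝ))) := by
    refine (φ.integrable.restrict).bdd_mul ?_ (Filter.Eventually.of_forall fun x => le_of_eq (norm_exp_ipt x t))
    exact (Complex.continuous_exp.comp (by continuity)).aestronglyMeasurable
  exact hb.congr (Filter.Eventually.of_forall fun p => mul_comm _ _)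

lemma tendB (φ : SchwartzMap ℝ ℂ) : Tendsto (fun p : ℝ => φ p) atTop (𝓝 0) := by
  have h := φ.toZeroAtInfty.zero_at_infty'
  rw [cocompact_eq_atBot_atTop] at h
  exact (h.mono_left le_sup_right).congr fun x => by simp

lemma ibp (φ ψ : SchwartzMap ℝ ℂ)
    (hψ : ∀ x : ℝ, HasDerivAt (fun y : ℝ => φ y) (ψ x) x) (t : ℝ) :
    (∫ p in Set.Ioi (0:ℝ), ψ p * Complex.exp (Complex.I * p * t)) +
      (∫ p in Set.Ioi (0:ℝ), φ p * Complex.exp (Complex.I * p * t)) * (Complex.I * t)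
    = -(φ 0) := by
  set e : ℝ → ℂ := fun p => Complex.exp (Complex.I * p * t) with he
  have hexp : ∀ p : ℝ, HasDerivAt e (e p * (Complex.I * t)) p := by
    intro p
    have h1 : HasDerivAt (fun p : ℝ => ((p : ℂ))) 1 p := by
      exact (hasDerivAt_id p).ofReal_comp
    have h2 : HasDerivAt (fun p : ℝ => Complex.I * (p:ℂ) * (t:ℂ)) (Complex.I * t) p := by
      simpa [mul_comm, mul_assoc, mul_left_comm] using (h1.const_mul Complex.I).mul_const (t:ℂ)
    simpa [he] using h2.cexp
  have hF : ∀ p : ℝ, HasDerivAt (fun p : ℝ => φ p * e p)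
      (ψ p * e p + φ p * (e p * (Complex.I * t))) p := fun p => (hψ p).mul (hexp p)
  have hint : IntegrableOn (fun p : ℝ => ψ p * e p + φ p * (e p * (Complex.I * t)))
      (Set.Ioi (0:ℝ)) volume := by
    refine (intA ψ t).add ?_
    exact ((intA φ t).mul_const (Complex.I * t)).congr
      (Filter.Eventually.of_forall fun p => mul_assoc _ _ _)
  have hlim : Tendsto (fun p : ℝ => φ p * e p) atTop (𝓝 0) := by
    rw [tendsto_zero_iff_norm_tendsto_zero]
    have : Tendsto (fun p : ℝ => ‖φ p‖) atTop (𝓝 0) := by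
      simpa using (tendB φ).norm
    refine this.congr fun p => ?_
    rw [norm_mul, he, norm_exp_ipt, mul_one]
  have key := integral_Ioi_of_hasDerivAt_of_tendsto
    (f := fun p : ℝ => φ p * e p)
    (f' := fun p : ℝ => ψ p * e p + φ p * (e p * (Complex.I * t)))
    (a := 0) (m := 0)
    ((hF 0).continuousAt.continuousWithinAt)
    (fun x _ => hF x) hint hlim
  have hsplit : ∫ p in Set.Ioi (0:ℝ), (ψ p * e p + φ p * (e p * (Complex.I * t)))
      = (∫ p in Set.Ioi (0:ℝ), ψ p * e p)
        + (∫ p in Set.Ioi (0:ℝ), φ p * e p) * (Complex.I * t) := by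
    rw [integral_add (intA ψ t) (((intA φ t).mul_const (Complex.I * t)).congr
      (Filter.Eventually.of_forall fun p => mul_assoc _ _ _))]
    congr 1
    rw [← integral_mul_const]
    exact integral_congr_ae (Filter.Eventually.of_forall fun p => (mul_assoc _ _ _).symm)
  rw [hsplit] at key
  simpa [he] using key

theorem stmt_11 (f : SchwartzMap ℝ ℂ) :
    Filter.Tendsto
      (fun t : ℝ => (t : ℂ) ^ 2 *
        ∫ p in Set.Ioi (0 : ℝ), f p * Complex.exp (Complex.I * p * t) * p)
      Filter.atTop (nhds (-(f 0))) := by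
  have hg : Function.HasTemperateGrowth (fun x : ℝ => ((x : ℂ))) :=
    Complex.ofRealCLM.hasTemperateGrowth
  set g0 : SchwartzMap ℝ ℂ :=
    SchwartzMap.bilinLeftCLM (ContinuousLinearMap.mul ℝ ℂ) hg f with hg0def
  have hg0_apply : ∀ x : ℝ, g0 x = f x * x := fun x => rfl
  set g1 : SchwartzMap ℝ ℂ := SchwartzMap.derivCLM ℝ ℂ g0 with hg1def
  set g2 : SchwartzMap ℝ ℂ := SchwartzMap.derivCLM ℝ ℂ g1 with hg2def
  set g3 : SchwartzMap ℝ ℂ := SchwartzMap.derivCLM ℝ ℂ g2 with hg3def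
  have hd : ∀ (h : SchwartzMap ℝ ℂ) (x : ℝ),
      HasDerivAt (fun y : ℝ => h y) (SchwartzMap.derivCLM ℝ ℂ h x) x := fun h x => by
    rw [SchwartzMap.derivCLM_apply]
    exact h.differentiableAt.hasDerivAt
  have hg0_zero : g0 0 = 0 := by simp [hg0_apply]
  have hg1_zero : g1 0 = f 0 := by
    have h1 : HasDerivAt (fun x : ℝ => ((x : ℂ))) 1 0 := by
      exact (hasDerivAt_id (0:ℝ)).ofReal_comp
    have h2 : HasDerivAt (fun y : ℝ => g0 y) (f 0) 0 := by
      have := (f.differentiableAt.hasDerivAt.mul h1)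
      simp only [Complex.ofReal_zero, mul_zero, zero_add, mul_one] at this
      exact this
    rw [hg1def, SchwartzMap.derivCLM_apply]
    exact h2.deriv
  set Ig : SchwartzMap ℝ ℂ → ℝ → ℂ := fun h t =>
    ∫ p in Set.Ioi (0:ℝ), h p * Complex.exp (Complex.I * p * t) with hIgdef
  have eq0 : ∀ t : ℝ, Ig g1 t + Ig g0 t * (Complex.I * t) = -(g0 0) :=
    fun t => ibp g0 g1 (fun x => hd g0 x) t
  have eq1 : ∀ t : ℝ, Ig g2 t + Ig g1 t * (Complex.I * t) = -(g1 0) :=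
    fun t => ibp g1 g2 (fun x => hd g1 x) t
  have eq2 : ∀ t : ℝ, Ig g3 t + Ig g2 t * (Complex.I * t) = -(g2 0) :=
    fun t => ibp g2 g3 (fun x => hd g2 x) t
  have hW : ∀ t : ℝ,
      (∫ p in Set.Ioi (0:ℝ), f p * Complex.exp (Complex.I * p * t) * p) = Ig g0 t :=
    fun t => integral_congr_ae (Filter.Eventually.of_forall fun p => by
      beta_reduce; rw [hg0_apply]; ring)
  have key : ∀ t : ℝ, (t : ℂ) ^ 2 * Ig g0 t = -(f 0) - Ig g2 t := by
    intro t
    have A := eq0 t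
    have B := eq1 t
    rw [hg0_zero, neg_zero] at A
    rw [hg1_zero] at B
    have C : (Complex.I) ^ 2 = -1 := Complex.I_sq
    linear_combination (-(Complex.I * t)) * A + B + (Ig g0 t * (t:ℂ)^2) * C
  -- the remainder integral tends to zero
  set C : ℝ := ∫ p in Set.Ioi (0:ℝ), ‖g3 p‖ with hC
  have hIg3_bound : ∀ t : ℝ, ‖Ig g3 t‖ ≤ C := by
    intro t
    refine (norm_integral_le_integral_norm _).trans (le_of_eq ?_)
    refine integral_congr_ae (Filter.Eventually.of_forall fun p => ?_)
    beta_reduce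
    rw [norm_mul, norm_exp_ipt, mul_one]
  have hIg2_tendsto : Tendsto (fun t : ℝ => Ig g2 t) atTop (𝓝 0) := by
    apply squeeze_zero_norm' (a := fun t : ℝ => (‖g2 0‖ + C) / t)
    · filter_upwards [eventually_gt_atTop (0:ℝ)] with t ht
      have A := eq2 t
      have hIg2t : Ig g2 t * (Complex.I * t) = -(g2 0) - Ig g3 t := by
        linear_combination A
      have h1 : ‖Ig g2 t‖ * t = ‖Ig g2 t * (Complex.I * t)‖ := by
        rw [norm_mul, norm_mul, Complex.norm_I, one_mul, Complex.norm_real,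
          Real.norm_eq_abs, abs_of_pos ht]
      have h2 : ‖Ig g2 t * (Complex.I * t)‖ ≤ ‖g2 0‖ + C := by
        rw [hIg2t]
        refine (norm_sub_le _ _).trans ?_
        gcongr
        · exact le_of_eq (norm_neg _)
        · exact hIg3_bound t
      rw [le_div_iff₀ ht]
      rw [h1]
      exact h2
    · exact tendsto_const_nhds.div_atTop tendsto_id
  have final : Tendsto (fun t : ℝ => -(f 0) - Ig g2 t) atTop (𝓝 (-(f 0))) := by
    have := tendsto_const_nhds (x := -(f 0)) (f := atTop (α := ℝ)) |>.sub hIg2_tendsto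
    simpa using this
  refine final.congr fun t => ?_
  rw [hW t, key t]
end

section
/- For every real x < −4m², the boundary values of the imaginary part of F_a across the cut are lim_{ε→0⁺} Im(F_a(x + iε)) = π·√(1 + 4m²/x) and lim_{ε→0⁺} Im(F_a(x − iε)) = −π·√(1 + 4m²/x); since √(1 + 4m²/x) > 0 for x < −4m², the imaginary part of F_a is discontinuous across the half-line (−∞, −4m²). -/
open MeasureTheory Complex Filter Set

lemma scale_int (f : ℝ → ℝ) (c : ℝ) (hc : 0 < c) (d : ℝ) :
    (∫ x : ℝ, f x) = c • ∫ x : ℝ, f (c * x + d) := by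
  rw [MeasureTheory.Measure.integral_comp_mul_left (fun y => f (y + d)) c]
  simp only [integral_add_right_eq_self, smul_eq_mul, abs_of_pos (inv_pos.mpr hc)]
  rw [← mul_assoc, mul_inv_cancel₀ (ne_of_gt hc), one_mul]

lemma Fa_integrable (b a : ℝ) (hb : 0 < b) (ha : -b < a) (z : ℂ) (hz : z.im ≠ 0) :
    IntegrableOn (fun u : ℝ => ((Real.sqrt (1 - b / u) : ℝ) : ℂ) *
      (1 / ((u : ℂ) + (a : ℂ)) - 1 / ((u : ℂ) + z))) (Set.Ioi b) := by
  set f : ℝ → ℂ := fun u => ((Real.sqrt (1 - b / u) : ℝ) : ℂ) *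
      (1 / ((u : ℂ) + (a : ℂ)) - 1 / ((u : ℂ) + z)) with hf
  have hcont : ContinuousOn f (Set.Ici b) := by
    apply ContinuousOn.mul
    · apply Continuous.comp_continuousOn continuous_ofReal
      apply Real.continuous_sqrt.comp_continuousOn
      exact continuousOn_const.sub (continuousOn_const.div continuousOn_id
        (fun u hu => ne_of_gt (lt_of_lt_of_le hb hu)))
    · apply ContinuousOn.sub
      · apply ContinuousOn.div continuousOn_const
        · exact (continuous_ofReal.continuousOn).add continuousOn_const
        · intro u hu h
          have h2 : (u : ℂ).re + (a:ℂ).re = 0 := by rw [← Complex.add_re, h, Complex.zero_re]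
          simp at h2
          have : b + a ≤ 0 := by nlinarith [mem_Ici.mp hu]
          linarith
      · apply ContinuousOn.div continuousOn_const
        · exact (continuous_ofReal.continuousOn).add continuousOn_const
        · intro u _ h
          have h2 : (u : ℂ).im + z.im = 0 := by rw [← Complex.add_im, h, Complex.zero_im]
          simp at h2
          exact hz h2
  set R : ℝ := max b (2 * (|z.re| + |a| + 1)) with hR
  have hbR : b ≤ R := le_max_left _ _
  have hR0 : 0 < R := lt_of_lt_of_le hb hbR
  have h1 : IntegrableOn f (Set.Ioc b R) :=
    (hcont.mono (Icc_subset_Ici_self)).integrableOn_Icc.mono_set Ioc_subset_Icc_self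
  have h2 : IntegrableOn f (Set.Ioi R) := by
    apply Integrable.mono' (g := fun u : ℝ => (4 * ‖z - (a:ℂ)‖) * u ^ (-2 : ℝ))
    · exact ((integrableOn_Ioi_rpow_of_lt (by norm_num) hR0).const_mul _)
    · exact (hcont.mono (fun u hu => le_of_lt (lt_of_le_of_lt hbR (mem_Ioi.mp hu)))).aestronglyMeasurable measurableSet_Ioi
    · filter_upwards [ae_restrict_mem measurableSet_Ioi] with u hu
      have huR : R < u := mem_Ioi.mp hu
      have hub : b < u := lt_of_le_of_lt hbR huR
      have hu0 : 0 < u := lt_trans hb hub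
      have hane : ((u:ℂ) + a) ≠ 0 := by
        intro h
        have h2 : (u : ℝ) + a = 0 := by exact_mod_cast congrArg Complex.re h
        nlinarith
      have hzne : ((u:ℂ) + z) ≠ 0 := by
        intro h
        have h2 : (u : ℂ).im + z.im = 0 := by rw [← Complex.add_im, h, Complex.zero_im]
        simp at h2; exact hz h2
      have key : (1 / ((u : ℂ) + (a : ℂ)) - 1 / ((u : ℂ) + z)) = (z - a) / (((u:ℂ) + a) * ((u:ℂ) + z)) := by
        field_simp
        ring
      rw [hf]
      simp only [norm_mul, key, norm_div]
      have hs : ‖((Real.sqrt (1 - b / u) : ℝ) : ℂ)‖ ≤ 1 := by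
        rw [Complex.norm_real, Real.norm_eq_abs, _root_.abs_of_nonneg (Real.sqrt_nonneg _)]
        have hbu : 0 < b / u := by positivity
        exact Real.sqrt_le_one.mpr (by linarith)
      have hua : u / 2 ≤ ‖(u:ℂ) + (a:ℂ)‖ := by
        rw [← Complex.ofReal_add, Complex.norm_real, Real.norm_eq_abs]
        have h3 : u / 2 ≤ u + a := by
          have h4 : 2 * |a| ≤ R := le_trans (by nlinarith [abs_nonneg z.re]) (le_max_right _ _)
          cases abs_cases a with
          | inl h => nlinarith
          | inr h => nlinarith
        exact le_trans h3 (le_abs_self _)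
      have huz : u / 2 ≤ ‖(u:ℂ) + z‖ := by
        have h3 : u / 2 ≤ u + z.re := by
          have h4 : 2 * |z.re| ≤ R := le_trans (by nlinarith [abs_nonneg a]) (le_max_right _ _)
          cases abs_cases z.re with
          | inl h => nlinarith
          | inr h => nlinarith
        calc u / 2 ≤ u + z.re := h3
          _ = ((u:ℂ) + z).re := by simp
          _ ≤ |((u:ℂ) + z).re| := le_abs_self _
          _ ≤ ‖(u:ℂ) + z‖ := Complex.abs_re_le_norm _
      have hu2 : (0:ℝ) < u / 2 := by linarith
      have hrpow : u ^ (-2:ℝ) = (u^2)⁻¹ := by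
        rw [Real.rpow_neg hu0.le, show ((2:ℝ)) = ((2:ℕ):ℝ) by norm_num, Real.rpow_natCast]
      calc ‖((Real.sqrt (1 - b/u) : ℝ) : ℂ)‖ * (‖z - (a:ℂ)‖ / (‖(u:ℂ) + (a:ℂ)‖ * ‖(u:ℂ) + z‖))
          ≤ 1 * (‖z - (a:ℂ)‖ / ((u/2)*(u/2))) := by
            apply mul_le_mul hs _ (by positivity) zero_le_one
            apply div_le_div_of_nonneg_left (norm_nonneg _) (by positivity)
            exact mul_le_mul hua huz (le_of_lt hu2) (norm_nonneg _)
        _ = 4 * ‖z - (a:ℂ)‖ * u ^ (-2:ℝ) := by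
            rw [hrpow]; field_simp; ring
  have hsplit : Set.Ioi b = Set.Ioc b R ∪ Set.Ioi R := by
    rw [Set.Ioc_union_Ioi_eq_Ioi hbR]
  rw [hsplit]
  exact h1.union h2

lemma im_formula (s a x ε u : ℝ) :
    (((s:ℝ):ℂ) * (1 / ((u:ℂ) + (a:ℂ)) - 1 / ((u:ℂ) + ((x:ℂ) + (ε:ℂ) * Complex.I)))).im
      = s * (ε / ((u + x)^2 + ε^2)) := by
  rw [one_div, one_div, ← Complex.ofReal_add, ← Complex.ofReal_inv]
  simp [Complex.mul_im, Complex.sub_im, Complex.inv_im, Complex.normSq_apply]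
  ring

/-- The plus-side limit. -/
lemma plus_side (m a : ℝ) (hm : 0 < m) (ha : -4 * m ^ 2 < a) (x : ℝ) (hx : x < -4 * m ^ 2) :
    Filter.Tendsto (fun ε : ℝ => (Fa m a ((x : ℂ) + (ε : ℂ) * Complex.I)).im)
      (nhdsWithin 0 (Set.Ioi 0)) (nhds (Real.pi * Real.sqrt (1 + 4 * m ^ 2 / x))) := by
  set b : ℝ := 4 * m ^ 2 with hbdef
  have hb : 0 < b := by positivity
  have ha' : -b < a := by rw [hbdef]; linarith
  set c : ℝ := -x with hcdef
  have hbc : b < c := by simp [hcdef]; linarith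
  have hc0 : 0 < c := lt_trans hb hbc
  -- the extended square-root function
  set g : ℝ → ℝ := Set.indicator (Set.Ioi b) (fun u => Real.sqrt (1 - b / u)) with hg
  have hg_meas : Measurable g := by
    apply Measurable.indicator _ measurableSet_Ioi
    exact Real.continuous_sqrt.measurable.comp (measurable_const.sub (measurable_const.div measurable_id))
  have hg_bdd : ∀ w, ‖g w‖ ≤ 1 := by
    intro w
    rw [hg, Real.norm_eq_abs]
    by_cases h : w ∈ Set.Ioi b
    · rw [Set.indicator_of_mem h, _root_.abs_of_nonneg (Real.sqrt_nonneg _)]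
      have : 0 < b / w := div_pos hb (lt_trans hb (mem_Ioi.mp h))
      exact Real.sqrt_le_one.mpr (by linarith)
    · rw [Set.indicator_of_notMem h]; simp
  -- Φ
  set Φ : ℝ → ℝ → ℝ := fun ε t => g (ε * t + c) * (1 + t^2)⁻¹ with hΦ
  -- key identity for ε > 0
  have key : ∀ ε : ℝ, 0 < ε →
      (Fa m a ((x : ℂ) + (ε : ℂ) * Complex.I)).im = ∫ t : ℝ, Φ ε t := by
    intro ε hε
    have hzim : ((x:ℂ) + (ε:ℂ) * Complex.I).im ≠ 0 := by simp [ne_of_gt hε]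
    have hint := Fa_integrable b a hb ha' ((x:ℂ) + (ε:ℂ) * Complex.I) hzim
    have e1 : (Fa m a ((x : ℂ) + (ε : ℂ) * Complex.I)).im
        = ∫ u in Set.Ioi b, (((Real.sqrt (1 - b / u) : ℝ) : ℂ) *
            (1 / ((u : ℂ) + (a : ℂ)) - 1 / ((u : ℂ) + ((x:ℂ) + (ε:ℂ) * Complex.I)))).im := by
      rw [Fa]
      exact (integral_im hint).symm
    rw [e1]
    have e2 : (∫ u in Set.Ioi b, (((Real.sqrt (1 - b / u) : ℝ) : ℂ) *
            (1 / ((u : ℂ) + (a : ℂ)) - 1 / ((u : ℂ) + ((x:ℂ) + (ε:ℂ) * Complex.I)))).im)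
        = ∫ u in Set.Ioi b, Real.sqrt (1 - b / u) * (ε / ((u + x)^2 + ε^2)) := by
      apply setIntegral_congr_fun measurableSet_Ioi
      intro u _
      exact im_formula _ _ _ _ _
    rw [e2]
    have e3 : (∫ u in Set.Ioi b, Real.sqrt (1 - b / u) * (ε / ((u + x)^2 + ε^2)))
        = ∫ u : ℝ, Set.indicator (Set.Ioi b)
            (fun u => Real.sqrt (1 - b / u) * (ε / ((u + x)^2 + ε^2))) u := by
      rw [integral_indicator measurableSet_Ioi]
    rw [e3]
    rw [scale_int _ ε hε c]
    rw [smul_eq_mul, ← integral_const_mul]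
    congr 1
    funext t
    by_cases h : ε * t + c ∈ Set.Ioi b
    · rw [Set.indicator_of_mem h, hΦ]
      simp only [hg, Set.indicator_of_mem h]
      have : (ε * t + c + x) = ε * t := by rw [hcdef]; ring
      rw [this]
      have hd : (ε * t)^2 + ε^2 = ε^2 * (1 + t^2) := by ring
      rw [hd]
      have h1t : (0:ℝ) < 1 + t^2 := by positivity
      field_simp
    · rw [Set.indicator_of_notMem h, hΦ]
      simp only [hg, Set.indicator_of_notMem h]
      simp
  -- the limit function
  have lim_val : Real.pi * Real.sqrt (1 + b / x)
      = ∫ t : ℝ, Real.sqrt (1 - b / c) * (1 + t^2)⁻¹ := by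
    rw [integral_const_mul, integral_univ_inv_one_add_sq]
    rw [show (1 - b / c) = 1 + b / x by rw [hcdef, div_neg]; ring]
    ring
  -- DCT
  have hdct : Filter.Tendsto (fun ε : ℝ => ∫ t : ℝ, Φ ε t)
      (nhdsWithin 0 (Set.Ioi 0)) (nhds (∫ t : ℝ, Real.sqrt (1 - b / c) * (1 + t^2)⁻¹)) := by
    apply MeasureTheory.tendsto_integral_filter_of_dominated_convergence
      (bound := fun t : ℝ => (1 + t^2)⁻¹)
    · filter_upwards with ε
      apply Measurable.aestronglyMeasurable
      exact (hg_meas.comp (by fun_prop)).mul (by fun_prop)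
    · filter_upwards with ε
      filter_upwards with t
      rw [hΦ]
      simp only [norm_mul]
      calc ‖g (ε * t + c)‖ * ‖(1 + t^2)⁻¹‖ ≤ 1 * ‖(1 + t^2)⁻¹‖ := by
            apply mul_le_mul_of_nonneg_right (hg_bdd _) (norm_nonneg _)
        _ = (1 + t^2)⁻¹ := by
            rw [one_mul, Real.norm_eq_abs, _root_.abs_of_nonneg (by positivity)]
    · exact integrable_inv_one_add_sq
    · filter_upwards with t
      apply Tendsto.mul_const
      -- g (ε t + c) → √(1 - b/c)
      have h1 : Filter.Tendsto (fun ε : ℝ => ε * t + c) (nhdsWithin 0 (Set.Ioi 0)) (nhds c) := by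
        have hcont2 : Continuous (fun ε : ℝ => ε * t + c) := by continuity
        have h0 := hcont2.tendsto 0
        simp only [zero_mul, zero_add] at h0
        exact h0.mono_left nhdsWithin_le_nhds
      have h2 : ∀ᶠ ε in nhdsWithin (0:ℝ) (Set.Ioi 0), ε * t + c ∈ Set.Ioi b :=
        h1.eventually (Ioi_mem_nhds hbc)
      have hca : ContinuousAt (fun w : ℝ => Real.sqrt (1 - b / w)) c := by
        apply Real.continuous_sqrt.continuousAt.comp
        exact continuousAt_const.sub (continuousAt_const.div continuousAt_id (ne_of_gt hc0))
      have h3 : Filter.Tendsto (fun ε : ℝ => Real.sqrt (1 - b / (ε * t + c)))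
          (nhdsWithin 0 (Set.Ioi 0)) (nhds (Real.sqrt (1 - b / c))) :=
        hca.tendsto.comp h1
      apply Filter.Tendsto.congr' _ h3
      filter_upwards [h2] with ε hε
      rw [hg, Set.indicator_of_mem hε]
  rw [lim_val]
  apply Filter.Tendsto.congr' _ hdct
  filter_upwards [self_mem_nhdsWithin] with ε hε
  exact (key ε (mem_Ioi.mp hε)).symm

theorem stmt_13 (m a : ℝ) (hm : 0 < m) (ha : -4 * m ^ 2 < a) :
    ∀ x : ℝ, x < -4 * m ^ 2 →
      Filter.Tendsto (fun ε : ℝ => (Fa m a ((x : ℂ) + (ε : ℂ) * Complex.I)).im)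
        (nhdsWithin 0 (Set.Ioi 0)) (nhds (Real.pi * Real.sqrt (1 + 4 * m ^ 2 / x))) ∧
      Filter.Tendsto (fun ε : ℝ => (Fa m a ((x : ℂ) - (ε : ℂ) * Complex.I)).im)
        (nhdsWithin 0 (Set.Ioi 0)) (nhds (-(Real.pi * Real.sqrt (1 + 4 * m ^ 2 / x)))) ∧
      0 < Real.sqrt (1 + 4 * m ^ 2 / x) := by
  intro x hx
  have hx0 : x < 0 := by nlinarith
  have hpos : 0 < Real.sqrt (1 + 4 * m ^ 2 / x) := by
    apply Real.sqrt_pos.mpr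
    have h1 : -1 < 4 * m ^ 2 / x := by
      rw [lt_div_iff_of_neg hx0]; linarith
    linarith
  refine ⟨plus_side m a hm ha x hx, ?_, hpos⟩
  have hconj : ∀ ε : ℝ, Fa m a ((x:ℂ) - (ε:ℂ) * Complex.I)
      = (starRingEnd ℂ) (Fa m a ((x:ℂ) + (ε:ℂ) * Complex.I)) := by
    intro ε
    rw [Fa, Fa, ← integral_conj]
    congr 1
    funext u
    simp only [map_mul, map_sub, map_div₀, map_add, map_one, Complex.conj_ofReal, Complex.conj_I]
    ring_nf
  have heq : (fun ε : ℝ => (Fa m a ((x:ℂ) - (ε:ℂ) * Complex.I)).im)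
      = fun ε : ℝ => -((Fa m a ((x:ℂ) + (ε:ℂ) * Complex.I)).im) := by
    funext ε
    rw [hconj ε, Complex.conj_im]
  rw [heq]
  exact (plus_side m a hm ha x hx).neg
end

section
/- Let ω > 0 and let t be a nonzero real number. Then lim_{ε→0⁺} (1/(2π)) ∫_{−∞}^{∞} e^{i t p} / ((p − iε)² − ω²) dp equals −sin(ω t)/ω if t > 0, and equals 0 if t < 0. -/
open MeasureTheory Complex Filter
open Set Real FourierTransform RealInnerProductSpace


noncomputable def Hfun (ω ε : ℝ) : ℝ → ℂ :=
  Set.indicator (Ioi 0) (fun s : ℝ =>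
    (Complex.I / (2 * ω)) *
      (Complex.exp ((Complex.I * (ω + ε * Complex.I)) * s)
        - Complex.exp ((Complex.I * (-ω + ε * Complex.I)) * s)))

lemma re_w1 (ω ε : ℝ) : (Complex.I * (↑ω + ↑ε * Complex.I)).re = -ε := by simp
lemma re_w2 (ω ε : ℝ) : (Complex.I * (-↑ω + ↑ε * Complex.I)).re = -ε := by simp

lemma integrableOn_cexp_Ioi {w : ℂ} (hw : w.re < 0) :
    IntegrableOn (fun s : ℝ => Complex.exp (w * s)) (Ioi (0:ℝ)) := by
  apply Integrable.mono' ((exp_neg_integrableOn_Ioi 0 (by linarith : 0 < -w.re)))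
  · exact (Complex.continuous_exp.comp (continuous_const.mul Complex.continuous_ofReal)).aestronglyMeasurable.restrict
  · filter_upwards [ae_restrict_mem measurableSet_Ioi] with s _
    rw [Complex.norm_exp]
    simp [Complex.mul_re, neg_mul]

lemma Hfun_integrable {ω ε : ℝ} (hε : 0 < ε) : Integrable (Hfun ω ε) := by
  rw [Hfun, integrable_indicator_iff measurableSet_Ioi]
  exact ((integrableOn_cexp_Ioi (by rw [re_w1]; linarith)).sub
    (integrableOn_cexp_Ioi (by rw [re_w2]; linarith))).const_mul _

lemma integral_cexp_Ioi {w : ℂ} (hw : w.re < 0) :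
    ∫ s in Ioi (0:ℝ), Complex.exp (w * s) = -w⁻¹ := by
  have hw0 : w ≠ 0 := fun h => by simp [h] at hw
  have key := integral_Ioi_of_hasDerivAt_of_tendsto' (a := (0:ℝ))
    (f := fun s : ℝ => Complex.exp (w * s) / w)
    (f' := fun s : ℝ => Complex.exp (w * s)) ?_ (integrableOn_cexp_Ioi hw) ?_ (m := 0)
  · simpa using key
  · intro x _
    have : HasDerivAt (fun s : ℝ => Complex.exp (w * s)) (Complex.exp (w * x) * w) x := by
      have h1 : HasDerivAt (fun s : ℝ => w * (s:ℂ)) w x := by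
        simpa using (Complex.ofRealCLM.hasDerivAt (x := x)).const_mul w
      exact (Complex.hasDerivAt_exp (w * x)).comp x h1
    simpa [mul_div_cancel_right₀ _ hw0] using this.div_const w
  · rw [show (0:ℂ) = 0 / w by simp]
    apply Filter.Tendsto.div_const
    rw [tendsto_zero_iff_norm_tendsto_zero]
    have : (fun s : ℝ => ‖Complex.exp (w * s)‖) = fun s : ℝ => Real.exp (w.re * s) := by
      ext s; rw [Complex.norm_exp]; simp [Complex.mul_re]
    rw [this]
    exact Real.tendsto_exp_atBot.comp (by simpa using tendsto_id.const_mul_atTop_of_neg hw)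

lemma sub_a_ne_zero {ε : ℝ} (hε : 0 < ε) (x c : ℝ) : (x : ℂ) - (c + ε * Complex.I) ≠ 0 := by
  intro h
  have := congrArg Complex.im h
  simp at this
  linarith

lemma fourier_Hfun {ω ε : ℝ} (hω : 0 < ω) (hε : 0 < ε) (q : ℝ) :
    𝓕 (Hfun ω ε) q =
      ((2 * π * q - (ω + ε * Complex.I)) * (2 * π * q - (-ω + ε * Complex.I)))⁻¹ := by
  rw [Real.fourier_real_eq_integral_exp_smul]
  have hrw : (fun v : ℝ => Complex.exp (↑(-2 * π * v * q) * Complex.I) • Hfun ω ε v)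
      = Set.indicator (Ioi 0) (fun v : ℝ => (Complex.I / (2 * ω)) *
        (Complex.exp ((Complex.I * (ω + ε * Complex.I) - 2 * π * q * Complex.I) * v)
          - Complex.exp ((Complex.I * (-ω + ε * Complex.I) - 2 * π * q * Complex.I) * v))) := by
    ext v
    by_cases h : v ∈ Ioi (0:ℝ)
    · simp only [Hfun, Set.indicator_of_mem h, smul_eq_mul]
      have e1 : Complex.exp ((Complex.I * (ω + ε * Complex.I) - 2 * π * q * Complex.I) * v)
          = Complex.exp (Complex.I * (ω + ε * Complex.I) * v) * Complex.exp (↑(-2 * π * v * q) * Complex.I) := by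
        rw [← Complex.exp_add]; push_cast; ring_nf
      have e2 : Complex.exp ((Complex.I * (-ω + ε * Complex.I) - 2 * π * q * Complex.I) * v)
          = Complex.exp (Complex.I * (-ω + ε * Complex.I) * v) * Complex.exp (↑(-2 * π * v * q) * Complex.I) := by
        rw [← Complex.exp_add]; push_cast; ring_nf
      rw [e1, e2]; ring
    · simp [Hfun, Set.indicator_of_notMem h]
  rw [hrw, integral_indicator measurableSet_Ioi]
  have h1 : (Complex.I * (↑ω + ↑ε * Complex.I) - 2 * ↑π * ↑q * Complex.I).re = -ε := by simp
  have h2 : (Complex.I * (-↑ω + ↑ε * Complex.I) - 2 * ↑π * ↑q * Complex.I).re = -ε := by simp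
  rw [integral_const_mul,
    MeasureTheory.integral_sub (integrableOn_cexp_Ioi (by rw [h1]; linarith))
      (integrableOn_cexp_Ioi (by rw [h2]; linarith)),
    integral_cexp_Ioi (by rw [h1]; linarith), integral_cexp_Ioi (by rw [h2]; linarith)]
  have ha1 : (2 * π * q : ℂ) - (ω + ε * Complex.I) ≠ 0 := by
    have := sub_a_ne_zero hε (2 * π * q) ω; push_cast at this ⊢; exact this
  have ha2 : (2 * π * q : ℂ) - (-ω + ε * Complex.I) ≠ 0 := by
    have := sub_a_ne_zero hε (2 * π * q) (-ω); push_cast at this ⊢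
    simpa [sub_add_eq_sub_sub, sub_neg_eq_add] using this
  have hω' : (ω : ℂ) ≠ 0 := by exact_mod_cast hω.ne'
  rw [show Complex.I * (↑ω + ↑ε * Complex.I) - 2 * ↑π * ↑q * Complex.I
      = -(Complex.I * ((2 * ↑π * ↑q : ℂ) - (↑ω + ↑ε * Complex.I))) by ring,
    show Complex.I * (-↑ω + ↑ε * Complex.I) - 2 * ↑π * ↑q * Complex.I
      = -(Complex.I * ((2 * ↑π * ↑q : ℂ) - (-↑ω + ↑ε * Complex.I))) by ring]
  simp only [inv_neg, neg_neg, mul_inv, Complex.inv_I, neg_mul]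
  rw [sub_neg_eq_add, neg_add_eq_sub, ← mul_sub, inv_sub_inv ha2 ha1,
    show (2 * ↑π * ↑q : ℂ) - (↑ω + ↑ε * Complex.I) - (2 * ↑π * ↑q - (-↑ω + ↑ε * Complex.I)) = -(2 * ω) by ring]
  rw [div_eq_mul_inv, mul_inv]
  field_simp
  ring_nf
  simp only [show Complex.I ^ 4 = 1 by rw [pow_succ, pow_succ, Complex.I_sq]; simp [Complex.I_sq],
    show Complex.I ^ 3 = -Complex.I by rw [pow_succ, Complex.I_sq]; ring, Complex.I_sq]
  ring

lemma aux_ineq {ε : ℝ} (hε : 0 < ε) (q c : ℝ) :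
    1 + q ^ 2 ≤ ((1 + 2 * c ^ 2) / ε ^ 2 + 2) * ((2 * π * q - c) ^ 2 + ε ^ 2) := by
  have hπ : (3:ℝ) ≤ π := Real.pi_gt_three.le
  have hπ2 : (9:ℝ) ≤ π ^ 2 := by nlinarith
  have hq : q ^ 2 ≤ (2 * π * q) ^ 2 := by
    nlinarith [mul_nonneg (sq_nonneg q) (by linarith : (0:ℝ) ≤ π ^ 2 - 9)]
  have key : 1 + (2*π*q) ^ 2 ≤ ((1 + 2 * c ^ 2) / ε ^ 2 + 2) * ((2 * π * q - c) ^ 2 + ε ^ 2) := by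
    rw [div_add' _ _ _ (by positivity), div_mul_eq_mul_div, le_div_iff₀ (by positivity)]
    nlinarith [sq_nonneg (2*π*q - 2*c), sq_nonneg (ε*(2*π*q - c)), sq_nonneg (ε^2), sq_nonneg c,
      mul_nonneg (mul_nonneg (sq_nonneg c) (sq_nonneg ε)) (sq_nonneg (2*π*q - c)),
      mul_nonneg (sq_nonneg (2*π*q - c)) (sq_nonneg c)]
  linarith

lemma abs_sq_sub_a {ε : ℝ} (x c : ℝ) :
    ‖(x : ℂ) - (c + ε * Complex.I)‖ ^ 2 = (x - c) ^ 2 + ε ^ 2 := by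
  rw [Complex.sq_norm, Complex.normSq_apply]
  simp
  ring

lemma fourier_Hfun_integrable {ω ε : ℝ} (hω : 0 < ω) (hε : 0 < ε) :
    Integrable (𝓕 (Hfun ω ε)) := by
  have hC : (0:ℝ) < (1 + 2 * ω ^ 2) / ε ^ 2 + 2 := by positivity
  set C : ℝ := (1 + 2 * ω ^ 2) / ε ^ 2 + 2 with hCdef
  have hfun : 𝓕 (Hfun ω ε) = fun q : ℝ =>
      ((2 * π * q - ((ω:ℂ) + ε * Complex.I)) * (2 * π * q - (-(ω:ℂ) + ε * Complex.I)))⁻¹ := by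
    funext q; exact fourier_Hfun hω hε q
  have hne : ∀ q : ℝ, ((2 * π * q : ℂ) - ((ω:ℂ) + ε * Complex.I)) ≠ 0 ∧
      ((2 * π * q : ℂ) - (-(ω:ℂ) + ε * Complex.I)) ≠ 0 := by
    intro q
    constructor
    · have := sub_a_ne_zero hε (2 * π * q) ω; push_cast at this ⊢; exact this
    · have := sub_a_ne_zero hε (2 * π * q) (-ω); push_cast at this ⊢
      simpa [sub_add_eq_sub_sub, sub_neg_eq_add] using this
  rw [hfun]
  apply Integrable.mono' ((integrable_inv_one_add_sq).const_mul C)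
  · apply Continuous.aestronglyMeasurable
    apply Continuous.inv₀
    · fun_prop
    · exact fun q => mul_ne_zero (hne q).1 (hne q).2
  · refine Filter.Eventually.of_forall (fun q => ?_)
    set A := ‖(2 * π * q : ℂ) - ((ω:ℂ) + ε * Complex.I)‖ with hA
    set B := ‖(2 * π * q : ℂ) - (-(ω:ℂ) + ε * Complex.I)‖ with hB
    have hA0 : 0 < A := norm_pos_iff.mpr (hne q).1
    have hB0 : 0 < B := norm_pos_iff.mpr (hne q).2
    have hAsq : A ^ 2 = (2 * π * q - ω) ^ 2 + ε ^ 2 := by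
      rw [hA]; have := abs_sq_sub_a (ε := ε) (2 * π * q) ω; push_cast at this ⊢; exact this
    have hBsq : B ^ 2 = (2 * π * q + ω) ^ 2 + ε ^ 2 := by
      rw [hB]
      have := abs_sq_sub_a (ε := ε) (2 * π * q) (-ω); push_cast at this ⊢
      simpa [sub_add_eq_sub_sub, sub_neg_eq_add] using this
    have h1 : 1 + q ^ 2 ≤ C * A ^ 2 := by
      rw [hAsq, hCdef]; exact aux_ineq hε q ω
    have h2 : 1 + q ^ 2 ≤ C * B ^ 2 := by
      rw [hBsq, hCdef]
      have := aux_ineq hε q (-ω)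
      simp only [neg_sq, sub_neg_eq_add] at this
      exact this
    have hq1 : (0:ℝ) < 1 + q ^ 2 := by positivity
    have hprod : (1 + q ^ 2) ^ 2 ≤ (C * A * B) ^ 2 := by
      have := mul_le_mul h1 h2 (by positivity) (by positivity)
      calc (1 + q^2)^2 = (1+q^2)*(1+q^2) := by ring
        _ ≤ (C * A^2) * (C * B^2) := this
        _ = (C * A * B)^2 * C⁻¹ * C := by field_simp
        _ = (C * A * B)^2 := by field_simp
    have hmain : 1 + q ^ 2 ≤ C * A * B := by
      have h := Real.sqrt_le_sqrt hprod
      rwa [Real.sqrt_sq hq1.le, Real.sqrt_sq (by positivity : (0:ℝ) ≤ C * A * B)] at h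
    rw [norm_inv, norm_mul]
    have hABpos : 0 < A * B := mul_pos hA0 hB0
    have step : C⁻¹ * (1 + q ^ 2) ≤ A * B := by
      rw [inv_mul_le_iff₀ hC]; linarith [hmain]
    calc (‖(2 * ↑π * ↑q - ((ω:ℂ) + ↑ε * Complex.I))‖ * ‖(2 * ↑π * ↑q - (-(ω:ℂ) + ↑ε * Complex.I))‖)⁻¹
        = (A * B)⁻¹ := rfl
      _ ≤ (C⁻¹ * (1 + q ^ 2))⁻¹ := by
          apply inv_anti₀ (by positivity) step
      _ = C * (1 + q ^ 2)⁻¹ := by rw [mul_inv, inv_inv]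

lemma Hfun_continuousAt {ω ε t : ℝ} (ht : t ≠ 0) : ContinuousAt (Hfun ω ε) t := by
  rcases ht.lt_or_gt with h | h
  · have hev : Hfun ω ε =ᶠ[nhds t] (fun _ => 0) := by
      filter_upwards [Iio_mem_nhds h] with s hs
      exact Set.indicator_of_notMem (by simp only [mem_Ioi, not_lt]; exact le_of_lt hs) _
    exact (continuousAt_const).congr hev.symm
  · have hev : Hfun ω ε =ᶠ[nhds t] (fun s : ℝ =>
        (Complex.I / (2 * ω)) *
          (Complex.exp ((Complex.I * (ω + ε * Complex.I)) * s)
            - Complex.exp ((Complex.I * (-ω + ε * Complex.I)) * s))) := by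
      filter_upwards [Ioi_mem_nhds h] with s hs
      exact Set.indicator_of_mem hs _
    refine ContinuousAt.congr ?_ hev.symm
    fun_prop

lemma main_eq {ω ε t : ℝ} (hω : 0 < ω) (hε : 0 < ε) (ht : t ≠ 0) :
    (1 / (2 * π) : ℂ) *
        ∫ p : ℝ, Complex.exp (Complex.I * (t : ℂ) * (p : ℂ)) /
          (((p : ℂ) - (ε : ℂ) * Complex.I) ^ 2 - (ω : ℂ) ^ 2) = Hfun ω ε t := by
  have hg : (fun p : ℝ => Complex.exp (Complex.I * (t : ℂ) * (p : ℂ)) /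
      (((p : ℂ) - (ε : ℂ) * Complex.I) ^ 2 - (ω : ℂ) ^ 2))
      = fun p : ℝ => Complex.exp (Complex.I * (t : ℂ) * (p : ℂ)) *
        (((p:ℂ) - ((ω:ℂ) + ε * Complex.I)) * ((p:ℂ) - (-(ω:ℂ) + ε * Complex.I)))⁻¹ := by
    funext p
    rw [div_eq_mul_inv]
    congr 2
    ring
  rw [hg]
  set g : ℝ → ℂ := fun p : ℝ => Complex.exp (Complex.I * (t : ℂ) * (p : ℂ)) *
        (((p:ℂ) - ((ω:ℂ) + ε * Complex.I)) * ((p:ℂ) - (-(ω:ℂ) + ε * Complex.I)))⁻¹ with hgdef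
  have hcv : (∫ q : ℝ, g (2 * π * q)) = |(2*π)⁻¹| • ∫ p : ℝ, g p :=
    MeasureTheory.Measure.integral_comp_mul_left g (2*π)
  have h2π : (0:ℝ) < 2 * π := by positivity
  have hint : (∫ p : ℝ, g p) = (2*π : ℝ) • ∫ q : ℝ, g (2 * π * q) := by
    rw [hcv, abs_of_pos (by positivity), smul_smul, mul_inv_cancel₀ h2π.ne', one_smul]
  rw [hint]
  have hinv : (∫ q : ℝ, g (2 * π * q)) = 𝓕⁻ (𝓕 (Hfun ω ε)) t := by
    rw [Real.fourierInv_eq']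
    congr 1
    funext q
    rw [fourier_Hfun hω hε q, hgdef]
    simp only [smul_eq_mul, RCLike.inner_apply, conj_trivial]
    push_cast
    congr 1 <;> first
      | exact congrArg Complex.exp (by ring)
      | rfl
      | ring_nf
  rw [hinv, (Hfun_integrable hε).fourierInv_fourier_eq (fourier_Hfun_integrable hω hε)
    (Hfun_continuousAt ht)]
  rw [Complex.real_smul]
  push_cast
  have : (2 * (π:ℂ)) ≠ 0 := by
    simp [Real.pi_ne_zero]
  field_simp

lemma value_eq {ω : ℝ} (hω : 0 < ω) (t : ℝ) :
    (Complex.I / (2 * ω)) *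
      (Complex.exp ((Complex.I * ((ω:ℂ) + (0:ℝ) * Complex.I)) * t)
        - Complex.exp ((Complex.I * (-(ω:ℂ) + (0:ℝ) * Complex.I)) * t))
      = ((-(Real.sin (ω * t)) / ω : ℝ) : ℂ) := by
  have hω' : (ω : ℂ) ≠ 0 := by exact_mod_cast hω.ne'
  push_cast
  rw [show ((-Complex.sin ((ω:ℂ) * t)) / ω : ℂ)
      = -(((Complex.exp (-((ω:ℂ)*t) * Complex.I) - Complex.exp (((ω:ℂ)*t) * Complex.I)) * Complex.I / 2) / ω) by rw [Complex.sin]; ring,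
    show Complex.I * ((ω:ℂ) + 0 * Complex.I) * t = ((ω:ℂ)*t) * Complex.I by ring,
    show Complex.I * (-(ω:ℂ) + 0 * Complex.I) * t = (-((ω:ℂ)*t)) * Complex.I by ring]
  ring

theorem stmt_16 (ω t : ℝ) (hω : 0 < ω) (ht : t ≠ 0) :
    Filter.Tendsto
      (fun ε : ℝ => (1 / (2 * Real.pi) : ℂ) *
        ∫ p : ℝ, Complex.exp (Complex.I * (t : ℂ) * (p : ℂ)) /
          (((p : ℂ) - (ε : ℂ) * Complex.I) ^ 2 - (ω : ℂ) ^ 2))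
      (nhdsWithin 0 (Set.Ioi 0))
      (nhds (if 0 < t then ((-(Real.sin (ω * t)) / ω : ℝ) : ℂ) else 0)) := by
  apply Filter.Tendsto.congr' (f₁ := fun ε : ℝ => Hfun ω ε t)
  · filter_upwards [self_mem_nhdsWithin] with ε hε
    exact (main_eq hω hε ht).symm
  · by_cases hpos : 0 < t
    · rw [if_pos hpos]
      have hfun : (fun ε : ℝ => Hfun ω ε t) = fun ε : ℝ =>
          (Complex.I / (2 * ω)) *
            (Complex.exp ((Complex.I * ((ω:ℂ) + (ε:ℝ) * Complex.I)) * t)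
              - Complex.exp ((Complex.I * (-(ω:ℂ) + (ε:ℝ) * Complex.I)) * t)) := by
        funext ε
        exact Set.indicator_of_mem hpos _
      rw [hfun, ← value_eq hω t]
      have hcont : Continuous (fun ε : ℝ =>
          (Complex.I / (2 * ω)) *
            (Complex.exp ((Complex.I * ((ω:ℂ) + (ε:ℝ) * Complex.I)) * t)
              - Complex.exp ((Complex.I * (-(ω:ℂ) + (ε:ℝ) * Complex.I)) * t))) := by
        fun_prop
      exact (hcont.tendsto 0).mono_left nhdsWithin_le_nhds
    · rw [if_neg hpos]
      have hfun : (fun ε : ℝ => Hfun ω ε t) = fun _ : ℝ => (0:ℂ) := by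
        funext ε
        exact Set.indicator_of_notMem hpos _
      rw [hfun]
      exact tendsto_const_nhds
end
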